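/- arXiv:1207.3230 — 5 statements merged into one kernel-verified Lean document; each statement's English description precedes it below -/
import Mathlib

section
/- Let g ≥ 5 and let a be an admissible Prym parameter system of genus g, and let l ≥ 1. If v ∈ Λ^l T_g(a) ⊗ H_g(a) satisfies F_l^a(v) = 0, then v lies in the subspace W spanned by the elements t_I ⊗ s_j, where I = (i_1 < ⋯ < i_l) ⊆ {1,…,g−1}, 1 ≤ j ≤ g and j ∉ I. (In other words, the kernel of the Koszul map F_l^a is contained in W.) -/
open Polynomial TensorProduct

set_option synthInstance.maxHeartbeats 1000000
set_option maxHeartbeats 1000000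

noncomputable section

/-- Pairs of polynomials: restrictions of sections to the two rational components. -/
abbrev PP : Type := Polynomial ℂ × Polynomial ℂ

/-- A subset of `ℂ^σ` is Zariski open if it is the complement of the common zero locus
of a set of polynomials. -/
def IsZariskiOpen {σ : Type} (U : Set (σ → ℂ)) : Prop :=
  ∃ S : Set (MvPolynomial σ ℂ), U = {x | ∃ p ∈ S, MvPolynomial.eval x p ≠ 0}

/-- Remove the `m`-th entry of a tuple. -/
def removeIdx {α : Type*} {l : ℕ} (m : Fin l) (v : Fin l → α) (j : Fin (l - 1)) : α :=
  if h : (j : ℕ) < (m : ℕ) then v ⟨j, by have := m.2; omega⟩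
  else v ⟨(j : ℕ) + 1, by have := j.2; have := m.2; omega⟩

/-- The generator `v 0 ∧ ⋯ ∧ v (n-1)` of the `n`-th exterior power. -/
def wedgeP (R : Type*) [CommRing R] {M : Type*} [AddCommGroup M] [Module R M]
    (n : ℕ) (v : Fin n → M) : ⋀[R]^n M :=
  ⟨ExteriorAlgebra.ιMulti R n v, ExteriorAlgebra.ιMulti_range R n (Set.mem_range_self v)⟩

/-- Componentwise multiplication by a fixed pair of polynomials, as a `ℂ`-linear map. -/
def mulPair (q : PP) : PP →ₗ[ℂ] PP := LinearMap.mulLeft ℂ q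

section Prym

variable (g : ℕ)

/-- `M_j(t) = ∏_{r=1}^{g-1} (t - a_{r,j})`. -/
def prymM (a : Fin (g - 1) × Fin 2 → ℂ) (j : Fin 2) : Polynomial ℂ :=
  ∏ r : Fin (g - 1), (X - C (a (r, j)))

/-- `A_j = ∏_{i=1}^{g-1} a_{i,j}`. -/
def prymA (a : Fin (g - 1) × Fin 2 → ℂ) (j : Fin 2) : ℂ :=
  ∏ r : Fin (g - 1), a (r, j)

/-- `d_1 = -A_1/A_2`, `d_2 = 1`. -/
def prymD (a : Fin (g - 1) × Fin 2 → ℂ) (j : Fin 2) : ℂ :=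
  if j = 0 then -(prymA g a 0) / (prymA g a 1) else 1

/-- The polynomial `p_{i,j}`: `t·M_j(t)/(t - a_{i,j})` for `i ≤ k = ⌊g/2⌋` (`1`-based) and
`-d_j·a_{i,j}·M_j(t)/(A_j (t - a_{i,j}))` for `i ≥ k+1` (all indices `0`-based in Lean). -/
def prymPoly (a : Fin (g - 1) × Fin 2 → ℂ) (i : Fin (g - 1)) (j : Fin 2) : Polynomial ℂ :=
  if (i : ℕ) < g / 2 then
    X * ∏ r ∈ Finset.univ.erase i, (X - C (a (r, j)))
  else
    C (-(prymD g a j) * a (i, j) / prymA g a j) * ∏ r ∈ Finset.univ.erase i, (X - C (a (r, j)))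

/-- The Prym-canonical section `t_i = (p_{i,1}, p_{i,2})`. -/
def prymSection (a : Fin (g - 1) × Fin 2 → ℂ) (i : Fin (g - 1)) : PP :=
  (prymPoly g a i 0, prymPoly g a i 1)

/-- The canonical sections `s_1, …, s_g`:
`s_j = (t·M_1/(t - a_{j,1}), -t·M_2/(t - a_{j,2}))` for `j ≤ g-1` and `s_g = (M_1, -M_2)`. -/
def prymCanSection (a : Fin (g - 1) × Fin 2 → ℂ) (j : Fin g) : PP :=
  if h : (j : ℕ) < g - 1 then
    (X * ∏ r ∈ Finset.univ.erase (⟨j, h⟩ : Fin (g - 1)), (X - C (a (r, 0))),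
     -(X * ∏ r ∈ Finset.univ.erase (⟨j, h⟩ : Fin (g - 1)), (X - C (a (r, 1)))))
  else (prymM g a 0, -(prymM g a 1))

/-- `T_g(a)`, the span of the Prym-canonical sections (a realization of `H⁰(C, K_C ⊗ A)`). -/
def Tspace (a : Fin (g - 1) × Fin 2 → ℂ) : Submodule ℂ PP :=
  Submodule.span ℂ (Set.range (prymSection g a))

/-- `H_g(a)`, the span of the canonical sections (a realization of `H⁰(C, K_C)`). -/
def Hspace (a : Fin (g - 1) × Fin 2 → ℂ) : Submodule ℂ PP :=
  Submodule.span ℂ (Set.range (prymCanSection g a))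

/-- `t_i` as an element of `T_g(a)`. -/
def tSec (a : Fin (g - 1) × Fin 2 → ℂ) (i : Fin (g - 1)) : Tspace g a :=
  ⟨prymSection g a i, Submodule.subset_span ⟨i, rfl⟩⟩

/-- `s_j` as an element of `H_g(a)`. -/
def sSec (a : Fin (g - 1) × Fin 2 → ℂ) (j : Fin g) : Hspace g a :=
  ⟨prymCanSection g a j, Submodule.subset_span ⟨j, rfl⟩⟩

/-- An admissible Prym parameter system of genus `g`: all entries nonzero and, for each `j`,
the `a_{1,j}, …, a_{g-1,j}` pairwise distinct. -/
def PrymAdmissible (a : Fin (g - 1) × Fin 2 → ℂ) : Prop :=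
  (∀ p, a p ≠ 0) ∧ ∀ j : Fin 2, Function.Injective fun i : Fin (g - 1) => a (i, j)

/-- `F` is the Koszul map `F_l^a : Λ^l T_g(a) ⊗ H_g(a) → Λ^{l-1} T_g(a) ⊗ (ℂ[t]×ℂ[t])`,
`v_1 ∧ ⋯ ∧ v_l ⊗ s ↦ Σ_m (-1)^m v_1 ∧ ⋯ ∧ v̂_m ∧ ⋯ ∧ v_l ⊗ (v_m · s)`. -/
def IsPrymKoszul (a : Fin (g - 1) × Fin 2 → ℂ) (l : ℕ)
    (F : (⋀[ℂ]^l (Tspace g a)) ⊗[ℂ] (Hspace g a) →ₗ[ℂ]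
         (⋀[ℂ]^(l - 1) (Tspace g a)) ⊗[ℂ] PP) : Prop :=
  ∀ (v : Fin l → Tspace g a) (s : Hspace g a),
    F ((wedgeP ℂ l v) ⊗ₜ[ℂ] s) =
      ∑ m : Fin l, ((-1 : ℂ) ^ ((m : ℕ) + 1)) •
        ((wedgeP ℂ (l - 1) (removeIdx m v)) ⊗ₜ[ℂ] ((v m : PP) * (s : PP)))

/-- The subspace `W` spanned by the `t_I ⊗ s_j` with `j ∉ I`. -/
def Wsub (a : Fin (g - 1) × Fin 2 → ℂ) (l : ℕ) :
    Submodule ℂ ((⋀[ℂ]^l (Tspace g a)) ⊗[ℂ] (Hspace g a)) :=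
  Submodule.span ℂ
    {w | ∃ (I : Fin l → Fin (g - 1)) (j : Fin g), StrictMono I ∧ (∀ m, (I m : ℕ) ≠ (j : ℕ)) ∧
      w = (wedgeP ℂ l fun m => tSec g a (I m)) ⊗ₜ[ℂ] sSec g a j}

/-- The parameter system of genus `g-1` obtained by deleting the index `r`. -/
def prymDelete (a : Fin (g - 1) × Fin 2 → ℂ) (r : Fin (g - 1)) :
    Fin (g - 1 - 1) × Fin 2 → ℂ := fun p =>
  if h : (p.1 : ℕ) < (r : ℕ) then a (⟨p.1, by have := r.2; omega⟩, p.2)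
  else a (⟨(p.1 : ℕ) + 1, by have := p.1.2; omega⟩, p.2)

end Prym

section Canonical

variable (g : ℕ)

/-- An admissible canonical parameter system of genus `g`. -/
def CanAdmissible (a : Fin g × Fin 2 → ℂ) : Prop :=
  ∀ j : Fin 2, Function.Injective fun i : Fin g => a (i, j)

/-- The canonical section `s_i = (M_1(t)/(t - a_{i,1}), -M_2(t)/(t - a_{i,2}))`. -/
def canSection (a : Fin g × Fin 2 → ℂ) (i : Fin g) : PP :=
  (∏ r ∈ Finset.univ.erase i, (X - C (a (r, 0))),
   -∏ r ∈ Finset.univ.erase i, (X - C (a (r, 1))))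

/-- `H_g(a)`, the span of the canonical sections (a realization of `H⁰(C, K_C)`). -/
def Hc (a : Fin g × Fin 2 → ℂ) : Submodule ℂ PP :=
  Submodule.span ℂ (Set.range (canSection g a))

/-- `s_i` as an element of `H_g(a)`. -/
def cSec (a : Fin g × Fin 2 → ℂ) (i : Fin g) : Hc g a :=
  ⟨canSection g a i, Submodule.subset_span ⟨i, rfl⟩⟩

/-- `F` is the Koszul map `F_l^a : Λ^l H_g(a) ⊗ H_g(a) → Λ^{l-1} H_g(a) ⊗ (ℂ[t]×ℂ[t])`. -/
def IsCanKoszul (a : Fin g × Fin 2 → ℂ) (l : ℕ)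
    (F : (⋀[ℂ]^l (Hc g a)) ⊗[ℂ] (Hc g a) →ₗ[ℂ]
         (⋀[ℂ]^(l - 1) (Hc g a)) ⊗[ℂ] PP) : Prop :=
  ∀ (v : Fin l → Hc g a) (s : Hc g a),
    F ((wedgeP ℂ l v) ⊗ₜ[ℂ] s) =
      ∑ m : Fin l, ((-1 : ℂ) ^ ((m : ℕ) + 1)) •
        ((wedgeP ℂ (l - 1) (removeIdx m v)) ⊗ₜ[ℂ] ((v m : PP) * (s : PP)))

/-- `V_{g,l}(a)`: the span of the `s_I ⊗ s_j` with `j ≥ i_1`. -/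
def Vsub (a : Fin g × Fin 2 → ℂ) (l : ℕ) :
    Submodule ℂ ((⋀[ℂ]^l (Hc g a)) ⊗[ℂ] (Hc g a)) :=
  Submodule.span ℂ
    {w | ∃ (I : Fin l → Fin g) (j : Fin g), StrictMono I ∧ (∀ m : Fin l, (m : ℕ) = 0 → I m ≤ j) ∧
      w = (wedgeP ℂ l fun m => cSec g a (I m)) ⊗ₜ[ℂ] cSec g a j}

/-- The subspace `W ⊆ V_{g,l}(a)` spanned by the `s_I ⊗ s_j` with `j ∉ I` and `j > i_1`. -/
def WsubC (a : Fin g × Fin 2 → ℂ) (l : ℕ) :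
    Submodule ℂ ((⋀[ℂ]^l (Hc g a)) ⊗[ℂ] (Hc g a)) :=
  Submodule.span ℂ
    {w | ∃ (I : Fin l → Fin g) (j : Fin g), StrictMono I ∧ (∀ m, I m ≠ j) ∧
      (∀ m : Fin l, (m : ℕ) = 0 → I m < j) ∧
      w = (wedgeP ℂ l fun m => cSec g a (I m)) ⊗ₜ[ℂ] cSec g a j}

/-- The canonical parameter system of genus `g-1` obtained by deleting the index `r`. -/
def canDelete (a : Fin g × Fin 2 → ℂ) (r : Fin g) : Fin (g - 1) × Fin 2 → ℂ := fun p =>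
  if h : (p.1 : ℕ) < (r : ℕ) then a (⟨p.1, by have := r.2; omega⟩, p.2)
  else a (⟨(p.1 : ℕ) + 1, by have := p.1.2; omega⟩, p.2)

end Canonical

namespace PrymPf

open Submodule

variable {M : Type*} [AddCommGroup M] [Module ℂ M]

lemma mem_span_of_coe_mem {p : Submodule ℂ M} {S : Set p} {x : p}
    (h : (x : M) ∈ Submodule.span ℂ (p.subtype '' S)) : x ∈ Submodule.span ℂ S := by
  rw [← Submodule.map_span] at h
  obtain ⟨y, hy, hyx⟩ := h
  rwa [show y = x from Subtype.val_injective hyx] at hy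

lemma removeIdx_strictMono {α : Type*} [Preorder α] {l : ℕ} {m : Fin l} {v : Fin l → α}
    (hv : StrictMono v) : StrictMono (removeIdx m v) := by
  intro j j' hj
  have hjj : (j : ℕ) < (j' : ℕ) := hj
  unfold removeIdx
  split_ifs with h1 h2 h2
  · exact hv (show ((⟨j, by omega⟩ : Fin l)) < ⟨j', by omega⟩ from by
      simp only [Fin.mk_lt_mk]; omega)
  · exact hv (by simp only [Fin.mk_lt_mk]; omega)
  · omega
  · exact hv (by simp only [Fin.mk_lt_mk]; omega)

lemma removeIdx_comp {α β : Type*} {l : ℕ} (m : Fin l) (f : α → β) (v : Fin l → α) :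
    removeIdx m (fun j => f (v j)) = fun j => f (removeIdx m v j) := by
  funext j
  unfold removeIdx
  split_ifs <;> rfl

lemma range_eq_insert_removeIdx {α : Type*} {l : ℕ} (m : Fin l) (v : Fin l → α) :
    Set.range v = insert (v m) (Set.range (removeIdx m v)) := by
  ext x
  simp only [Set.mem_range, Set.mem_insert_iff]
  constructor
  · rintro ⟨m', rfl⟩
    rcases lt_trichotomy (m' : ℕ) (m : ℕ) with h | h | h
    · right
      refine ⟨⟨m', by omega⟩, ?_⟩
      rw [removeIdx, dif_pos (by simpa using h)]
    · left
      exact congrArg v (Fin.ext h)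
    · right
      have hm' := m'.2
      refine ⟨⟨(m' : ℕ) - 1, by omega⟩, ?_⟩
      rw [removeIdx, dif_neg (by simp; omega)]
      congr 1
      exact Fin.ext (by simp; omega)
  · rintro (rfl | ⟨j, rfl⟩)
    · exact ⟨m, rfl⟩
    · unfold removeIdx
      split_ifs with h
      · exact ⟨_, rfl⟩
      · exact ⟨_, rfl⟩

lemma strictMono_eq_of_range_eq {n N : ℕ} {f g : Fin n → Fin N} (hf : StrictMono f)
    (hg : StrictMono g) (h : Set.range f = Set.range g) : f = g := by
  classical
  have hcard : (Finset.univ.image f).card = n := by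
    rw [Finset.card_image_of_injective _ hf.injective, Finset.card_univ, Fintype.card_fin]
  have hfs : ∀ x, f x ∈ Finset.univ.image f := fun x =>
    Finset.mem_image_of_mem _ (Finset.mem_univ x)
  have hgs : ∀ x, g x ∈ Finset.univ.image f := by
    intro x
    have hx : g x ∈ Set.range f := h ▸ Set.mem_range_self x
    obtain ⟨y, hy⟩ := hx
    exact hy ▸ hfs y
  rw [Finset.orderEmbOfFin_unique hcard hfs hf, Finset.orderEmbOfFin_unique hcard hgs hg]

end PrymPf

namespace PrymPf

open Polynomial

variable (g : ℕ) (a : Fin (g - 1) × Fin 2 → ℂ)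

/-- Evaluation of the first component at `a (i,0)`, as a linear functional on `PP`. -/
def evA (i : Fin (g - 1)) : PP →ₗ[ℂ] ℂ :=
  (Polynomial.leval (a (i, 0))).comp (LinearMap.fst ℂ (Polynomial ℂ) (Polynomial ℂ))

lemma evA_apply (i : Fin (g - 1)) (q : PP) : evA g a i q = (q.1).eval (a (i, 0)) := rfl

lemma prod_erase_eval_ne_zero (ha : PrymAdmissible g a) (i : Fin (g - 1)) (j : Fin 2) :
    (∏ r ∈ Finset.univ.erase i, (X - C (a (r, j)))).eval (a (i, j)) ≠ 0 := by
  rw [eval_prod, Finset.prod_ne_zero_iff]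
  intro r hr
  simp only [eval_sub, eval_X, eval_C, sub_ne_zero]
  intro hEq
  exact (Finset.mem_erase.mp hr).1 (ha.2 j hEq).symm

lemma prod_erase_eval_eq_zero (i r : Fin (g - 1)) (j : Fin 2) (hir : i ≠ r) :
    (∏ r' ∈ Finset.univ.erase r, (X - C (a (r', j)))).eval (a (i, j)) = 0 := by
  rw [eval_prod]
  apply Finset.prod_eq_zero (Finset.mem_erase.mpr ⟨hir, Finset.mem_univ i⟩)
  simp

lemma prymA_ne_zero (ha : PrymAdmissible g a) (j : Fin 2) : prymA g a j ≠ 0 :=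
  Finset.prod_ne_zero_iff.mpr fun r _ => ha.1 (r, j)

lemma prymD_ne_zero (ha : PrymAdmissible g a) (j : Fin 2) : prymD g a j ≠ 0 := by
  unfold prymD
  split_ifs
  · exact div_ne_zero (neg_ne_zero.mpr (prymA_ne_zero g a ha 0)) (prymA_ne_zero g a ha 1)
  · exact one_ne_zero

lemma prymPoly_eval_self_ne_zero (ha : PrymAdmissible g a) (i : Fin (g - 1)) (j : Fin 2) :
    (prymPoly g a i j).eval (a (i, j)) ≠ 0 := by
  unfold prymPoly
  split_ifs
  · rw [eval_mul, eval_X]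
    exact mul_ne_zero (ha.1 (i, j)) (prod_erase_eval_ne_zero g a ha i j)
  · rw [eval_mul, eval_C]
    refine mul_ne_zero ?_ (prod_erase_eval_ne_zero g a ha i j)
    exact div_ne_zero (mul_ne_zero (neg_ne_zero.mpr (prymD_ne_zero g a ha j)) (ha.1 (i, j)))
      (prymA_ne_zero g a ha j)

lemma prymPoly_eval_other (i r : Fin (g - 1)) (j : Fin 2) (hir : i ≠ r) :
    (prymPoly g a r j).eval (a (i, j)) = 0 := by
  unfold prymPoly
  split_ifs <;> rw [eval_mul, prod_erase_eval_eq_zero g a i r j hir, mul_zero]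

lemma canFst_eval_eq_zero (i : Fin (g - 1)) (j : Fin g) (hij : (j : ℕ) ≠ (i : ℕ)) :
    ((prymCanSection g a j).1).eval (a (i, 0)) = 0 := by
  unfold prymCanSection
  split_ifs with h
  · have hne : i ≠ (⟨(j : ℕ), h⟩ : Fin (g - 1)) := by
      intro hEq
      exact hij (by rw [hEq])
    simp only
    rw [eval_mul, prod_erase_eval_eq_zero g a i ⟨(j : ℕ), h⟩ 0 hne, mul_zero]
  · simp only [prymM]
    rw [eval_prod]
    exact Finset.prod_eq_zero (Finset.mem_univ i) (by simp)

lemma canFst_eval_ne_zero (ha : PrymAdmissible g a) (i : Fin (g - 1)) (j : Fin g)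
    (hij : (j : ℕ) = (i : ℕ)) :
    ((prymCanSection g a j).1).eval (a (i, 0)) ≠ 0 := by
  have hlt : (j : ℕ) < g - 1 := hij ▸ i.2
  unfold prymCanSection
  rw [dif_pos hlt]
  have hIdx : (⟨(j : ℕ), hlt⟩ : Fin (g - 1)) = i := Fin.ext hij
  rw [hIdx]
  simp only
  rw [eval_mul, eval_X]
  exact mul_ne_zero (ha.1 (i, 0)) (prod_erase_eval_ne_zero g a ha i 0)

lemma evA_mul_left_zero (i r : Fin (g - 1)) (hri : r ≠ i) (q : PP) :
    evA g a i (prymSection g a r * q) = 0 := by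
  show ((prymSection g a r).1 * q.1).eval (a (i, 0)) = 0
  rw [eval_mul, show (prymSection g a r).1 = prymPoly g a r 0 from rfl,
    prymPoly_eval_other g a i r 0 (Ne.symm hri), zero_mul]

lemma evA_mul_can_zero (i : Fin (g - 1)) (p : PP) (j : Fin g) (hij : (j : ℕ) ≠ (i : ℕ)) :
    evA g a i (p * prymCanSection g a j) = 0 := by
  show (p.1 * (prymCanSection g a j).1).eval (a (i, 0)) = 0
  rw [eval_mul, canFst_eval_eq_zero g a i j hij, mul_zero]

lemma evA_key_ne_zero (ha : PrymAdmissible g a) (i : Fin (g - 1)) (j : Fin g)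
    (hij : (j : ℕ) = (i : ℕ)) :
    evA g a i (prymSection g a i * prymCanSection g a j) ≠ 0 := by
  show ((prymSection g a i).1 * (prymCanSection g a j).1).eval (a (i, 0)) ≠ 0
  rw [eval_mul]
  exact mul_ne_zero (prymPoly_eval_self_ne_zero g a ha i 0)
    (canFst_eval_ne_zero g a ha i j hij)

/-- Coordinate functional on `T_g(a)` dual to `tSec`. -/
def coordT (i : Fin (g - 1)) : Tspace g a →ₗ[ℂ] ℂ :=
  ((prymPoly g a i 0).eval (a (i, 0)))⁻¹ • ((evA g a i).comp (Tspace g a).subtype)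

lemma coordT_tSec (ha : PrymAdmissible g a) (i r : Fin (g - 1)) :
    coordT g a i (tSec g a r) = if r = i then 1 else 0 := by
  unfold coordT
  simp only [LinearMap.smul_apply, LinearMap.comp_apply, Submodule.coe_subtype, smul_eq_mul]
  split_ifs with h
  · subst h
    rw [show evA g a r ((tSec g a r : PP)) = (prymPoly g a r 0).eval (a (r, 0)) from rfl]
    exact inv_mul_cancel₀ (prymPoly_eval_self_ne_zero g a ha r 0)
  · rw [show evA g a i ((tSec g a r : PP)) = (prymPoly g a r 0).eval (a (i, 0)) from rfl,
      prymPoly_eval_other g a i r 0 (Ne.symm h), mul_zero]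

lemma span_tSec : Submodule.span ℂ (Set.range (tSec g a)) = ⊤ := by
  apply Submodule.map_injective_of_injective (Submodule.injective_subtype (Tspace g a))
  rw [Submodule.map_span, Submodule.map_top, Submodule.range_subtype, ← Set.range_comp]
  rfl

lemma span_sSec : Submodule.span ℂ (Set.range (sSec g a)) = ⊤ := by
  apply Submodule.map_injective_of_injective (Submodule.injective_subtype (Hspace g a))
  rw [Submodule.map_span, Submodule.map_top, Submodule.range_subtype, ← Set.range_comp]
  rfl

end PrymPf

namespace PrymPf

variable (g : ℕ) (a : Fin (g - 1) × Fin 2 → ℂ)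

lemma iMulti_tuple_mem_span (n : ℕ) (v : Fin n → Tspace g a) :
    ExteriorAlgebra.ιMulti ℂ n v ∈ Submodule.span ℂ
      {z : ExteriorAlgebra ℂ (Tspace g a) |
        ∃ I : Fin n → Fin (g - 1), StrictMono I ∧
          z = ExteriorAlgebra.ιMulti ℂ n fun m => tSec g a (I m)} := by
  classical
  have hc : ∀ m : Fin n, ∃ c : Fin (g - 1) → ℂ, ∑ i, c i • tSec g a i = v m := by
    intro m
    exact (Submodule.mem_span_range_iff_exists_fun ℂ).mp
      (by rw [span_tSec]; exact Submodule.mem_top)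
  choose c hcc using hc
  have hv : v = fun m => ∑ i, c m i • tSec g a i := by
    funext m
    exact (hcc m).symm
  rw [hv, ← AlternatingMap.coe_multilinearMap, MultilinearMap.map_sum]
  refine Submodule.sum_mem _ fun k _ => ?_
  rw [MultilinearMap.map_smul_univ, AlternatingMap.coe_multilinearMap]
  refine Submodule.smul_mem _ _ ?_
  by_cases hk : Function.Injective k
  · set σ := Tuple.sort k with hσ
    have hsm : StrictMono (k ∘ σ) :=
      (Tuple.monotone_sort k).strictMono_of_injective (hk.comp (Equiv.injective _))
    have hperm := (ExteriorAlgebra.ιMulti ℂ n (M := Tspace g a)).map_perm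
      (fun m => tSec g a (k m)) σ
    rcases Int.units_eq_one_or (Equiv.Perm.sign σ) with hs | hs
    · have heq : ExteriorAlgebra.ιMulti ℂ n (fun m => tSec g a (k m)) =
          ExteriorAlgebra.ιMulti ℂ n (fun m => tSec g a ((k ∘ σ) m)) := by
        rw [show (fun m => tSec g a ((k ∘ σ) m)) =
          (fun m => tSec g a (k m)) ∘ σ from rfl, hperm, hs, one_smul]
      rw [heq]
      exact Submodule.subset_span ⟨k ∘ σ, hsm, rfl⟩
    · have heq : ExteriorAlgebra.ιMulti ℂ n (fun m => tSec g a (k m)) =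
          -ExteriorAlgebra.ιMulti ℂ n (fun m => tSec g a ((k ∘ σ) m)) := by
        rw [show (fun m => tSec g a ((k ∘ σ) m)) =
          (fun m => tSec g a (k m)) ∘ σ from rfl, hperm, hs, Units.smul_def]
        norm_num
      rw [heq]
      exact Submodule.neg_mem _ (Submodule.subset_span ⟨k ∘ σ, hsm, rfl⟩)
  · obtain ⟨m1, m2, h12, hne⟩ := Function.not_injective_iff.mp hk
    rw [(ExteriorAlgebra.ιMulti ℂ n).map_eq_zero_of_eq (fun i => tSec g a (k i))
      (congrArg (tSec g a) h12) hne]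
    exact Submodule.zero_mem _

lemma wedge_mem_span (n : ℕ) (x : ⋀[ℂ]^n (Tspace g a)) :
    x ∈ Submodule.span ℂ
      {w : ⋀[ℂ]^n (Tspace g a) | ∃ I : Fin n → Fin (g - 1), StrictMono I ∧
        w = wedgeP ℂ n fun m => tSec g a (I m)} := by
  apply mem_span_of_coe_mem
  have hx : (x : ExteriorAlgebra ℂ (Tspace g a)) ∈
      Submodule.span ℂ (Set.range (ExteriorAlgebra.ιMulti ℂ n (M := Tspace g a))) := by
    rw [ExteriorAlgebra.ιMulti_span_fixedDegree]
    exact x.2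
  refine Submodule.span_le.mpr ?_ hx
  rintro z ⟨w, rfl⟩
  refine Submodule.span_le.mpr ?_ (iMulti_tuple_mem_span g a n w)
  rintro z' ⟨I, hI, rfl⟩
  exact Submodule.subset_span ⟨wedgeP ℂ n fun m => tSec g a (I m), ⟨I, hI, rfl⟩, rfl⟩

/-- The determinant-based alternating functional attached to a tuple of indices. -/
def detA {n : ℕ} (J : Fin n → Fin (g - 1)) :
    (Tspace g a) [⋀^Fin n]→ₗ[ℂ] ℂ :=
  (Matrix.detRowAlternating).compLinearMap (LinearMap.pi fun m => coordT g a (J m))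

/-- Linear functional on the exterior power detecting the wedge indexed by `J`. -/
def lamJ {n : ℕ} (J : Fin n → Fin (g - 1)) : (⋀[ℂ]^n (Tspace g a)) →ₗ[ℂ] ℂ :=
  (ExteriorAlgebra.liftAlternating
    (Function.update (fun k => (0 : (Tspace g a) [⋀^Fin k]→ₗ[ℂ] ℂ)) n (detA g a J))).comp
    (Submodule.subtype _)

lemma lamJ_wedge {n : ℕ} (J : Fin n → Fin (g - 1)) (w : Fin n → Tspace g a) :
    lamJ g a J (wedgeP ℂ n w) = detA g a J w := by
  unfold lamJ
  rw [LinearMap.comp_apply]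
  rw [show ((Submodule.subtype _) (wedgeP ℂ n w) : ExteriorAlgebra ℂ (Tspace g a)) =
    ExteriorAlgebra.ιMulti ℂ n w from rfl]
  rw [ExteriorAlgebra.liftAlternating_apply_ιMulti, Function.update_self]

lemma lamJ_self (ha : PrymAdmissible g a) {n : ℕ} {J : Fin n → Fin (g - 1)}
    (hJ : StrictMono J) :
    lamJ g a J (wedgeP ℂ n fun m => tSec g a (J m)) = 1 := by
  classical
  rw [lamJ_wedge]
  unfold detA
  rw [AlternatingMap.compLinearMap_apply]
  have hM : (fun m => LinearMap.pi (fun m' => coordT g a (J m')) (tSec g a (J m))) =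
      (1 : Matrix (Fin n) (Fin n) ℂ) := by
    funext m m'
    rw [LinearMap.pi_apply, coordT_tSec g a ha, Matrix.one_apply]
    by_cases h : m = m'
    · subst h; simp
    · rw [if_neg (fun hEq => h (hJ.injective hEq)), if_neg h]
  rw [show (Matrix.detRowAlternating
      (fun m => LinearMap.pi (fun m' => coordT g a (J m')) (tSec g a (J m))) : ℂ) =
    Matrix.det (1 : Matrix (Fin n) (Fin n) ℂ) from congrArg Matrix.det hM, Matrix.det_one]

lemma lamJ_other (ha : PrymAdmissible g a) {n : ℕ} {J J' : Fin n → Fin (g - 1)}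
    (hJ : StrictMono J) (hJ' : StrictMono J') (hne : J ≠ J') :
    lamJ g a J (wedgeP ℂ n fun m => tSec g a (J' m)) = 0 := by
  classical
  rw [lamJ_wedge]
  unfold detA
  rw [AlternatingMap.compLinearMap_apply]
  obtain ⟨m, hm⟩ : ∃ m, ∀ m', J' m ≠ J m' := by
    by_contra hcon
    push_neg at hcon
    apply hne
    apply strictMono_eq_of_range_eq hJ hJ'
    have hsub : Finset.univ.image J' ⊆ Finset.univ.image J := by
      intro x hx
      obtain ⟨m, _, rfl⟩ := Finset.mem_image.mp hx
      obtain ⟨m', hm'⟩ := hcon m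
      exact hm' ▸ Finset.mem_image_of_mem _ (Finset.mem_univ m')
    have hcardJ : (Finset.univ.image J).card = n := by
      rw [Finset.card_image_of_injective _ hJ.injective, Finset.card_univ, Fintype.card_fin]
    have hcardJ' : (Finset.univ.image J').card = n := by
      rw [Finset.card_image_of_injective _ hJ'.injective, Finset.card_univ, Fintype.card_fin]
    have himg : Finset.univ.image J' = Finset.univ.image J :=
      Finset.eq_of_subset_of_card_le hsub (by omega)
    have : (Finset.univ.image J : Set (Fin (g - 1))) = (Finset.univ.image J' : Set (Fin (g - 1))) := by
      rw [himg]
    simpa [Finset.coe_image, Finset.coe_univ, Set.image_univ] using this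
  apply Matrix.det_eq_zero_of_row_eq_zero m
  intro m'
  rw [LinearMap.pi_apply, coordT_tSec g a ha, if_neg (hm m')]

/-- Contraction of the second tensor factor against a linear functional. -/
def phiMap {X : Type*} [AddCommGroup X] [Module ℂ X] (f : PP →ₗ[ℂ] ℂ) :
    X ⊗[ℂ] PP →ₗ[ℂ] X :=
  TensorProduct.lift (((LinearMap.lsmul ℂ X).comp f).flip)

lemma phiMap_tmul {X : Type*} [AddCommGroup X] [Module ℂ X] (f : PP →ₗ[ℂ] ℂ)
    (x : X) (p : PP) : phiMap f (x ⊗ₜ[ℂ] p) = f p • x := rfl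

end PrymPf

namespace PrymPf

variable (g : ℕ) (a : Fin (g - 1) × Fin 2 → ℂ)

lemma L_tmul {n : ℕ} (J : Fin n → Fin (g - 1)) (f : PP →ₗ[ℂ] ℂ)
    (x : ⋀[ℂ]^n (Tspace g a)) (p : PP) :
    ((lamJ g a J).comp (phiMap f)) (x ⊗ₜ[ℂ] p) = f p * lamJ g a J x := by
  rw [LinearMap.comp_apply, phiMap_tmul, map_smul, smul_eq_mul]

end PrymPf


open PrymPf

/-- Lemma on the kernel of the Prym Koszul map, Lemma 3.1 / "Lemma W":
for `g ≥ 5`, an admissible Prym parameter system `a` of genus `g` and `l ≥ 1`, the kernel of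
the Koszul map `F_l^a` is contained in the span `W` of the `t_I ⊗ s_j` with `j ∉ I`. -/
theorem statement0 (g : ℕ) (hg : 5 ≤ g) (a : Fin (g - 1) × Fin 2 → ℂ)
    (ha : PrymAdmissible g a) (l : ℕ) (hl : 1 ≤ l)
    (F : (⋀[ℂ]^l (Tspace g a)) ⊗[ℂ] (Hspace g a) →ₗ[ℂ]
         (⋀[ℂ]^(l - 1) (Tspace g a)) ⊗[ℂ] PP)
    (hF : IsPrymKoszul g a l F)
    (v : (⋀[ℂ]^l (Tspace g a)) ⊗[ℂ] (Hspace g a)) (hv : F v = 0) :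
    v ∈ Wsub g a l := by
  classical
  haveI : Fintype {I : Fin l → Fin (g - 1) // StrictMono I} := Fintype.ofFinite _
  set Γ := ({I : Fin l → Fin (g - 1) // StrictMono I} × Fin g) with hΓ
  set bfun : Γ → (⋀[ℂ]^l (Tspace g a)) ⊗[ℂ] (Hspace g a) :=
    fun γ => (wedgeP ℂ l fun m => tSec g a (γ.1.1 m)) ⊗ₜ[ℂ] sSec g a γ.2 with hbfun
  -- v is in the span of the standard generators
  have hspan : v ∈ Submodule.span ℂ (Set.range bfun) := by
    have h1 : ∀ (x : ⋀[ℂ]^l (Tspace g a)) (y : Hspace g a),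
        x ⊗ₜ[ℂ] y ∈ Submodule.span ℂ (Set.range bfun) := by
      intro x y
      refine Submodule.span_induction
        (p := fun x _ => ∀ y : Hspace g a, x ⊗ₜ[ℂ] y ∈ Submodule.span ℂ (Set.range bfun))
        ?_ ?_ ?_ ?_ (wedge_mem_span g a l x) y
      · rintro x ⟨I, hI, rfl⟩ y
        have hy : y ∈ Submodule.span ℂ (Set.range (sSec g a)) := by
          rw [span_sSec]; exact Submodule.mem_top
        refine Submodule.span_induction
          (p := fun y _ => (wedgeP ℂ l fun m => tSec g a (I m)) ⊗ₜ[ℂ] y ∈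
            Submodule.span ℂ (Set.range bfun)) ?_ ?_ ?_ ?_ hy
        · try dsimp only
          rintro y ⟨j, rfl⟩
          exact Submodule.subset_span ⟨(⟨I, hI⟩, j), rfl⟩
        · try dsimp only
          rw [TensorProduct.tmul_zero]
          exact Submodule.zero_mem _
        · intro y₁ y₂ _ _ h₁ h₂
          try dsimp only at h₁ h₂ ⊢
          rw [TensorProduct.tmul_add]
          exact Submodule.add_mem _ h₁ h₂
        · intro r y₁ _ h₁
          try dsimp only at h₁ ⊢
          rw [TensorProduct.tmul_smul]
          exact Submodule.smul_mem _ _ h₁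
      · intro y
        try dsimp only
        rw [TensorProduct.zero_tmul]
        exact Submodule.zero_mem _
      · intro x₁ x₂ _ _ h₁ h₂ y
        try dsimp only at h₁ h₂ ⊢
        rw [TensorProduct.add_tmul]
        exact Submodule.add_mem _ (h₁ y) (h₂ y)
      · intro r x₁ _ h₁ y
        try dsimp only at h₁ ⊢
        rw [← TensorProduct.smul_tmul']
        exact Submodule.smul_mem _ _ (h₁ y)
    have h2 : v ∈ Submodule.span ℂ
        {t : (⋀[ℂ]^l (Tspace g a)) ⊗[ℂ] (Hspace g a) | ∃ x y, x ⊗ₜ y = t} := by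
      rw [TensorProduct.span_tmul_eq_top]
      exact Submodule.mem_top
    refine Submodule.span_le.mpr ?_ h2
    rintro t ⟨x, y, rfl⟩
    exact h1 x y
  obtain ⟨c, hsum⟩ := (Submodule.mem_span_range_iff_exists_fun ℂ).mp hspan
  -- the key vanishing claim
  have key : ∀ (I : Fin l → Fin (g - 1)) (hI : StrictMono I) (j : Fin g) (m₀ : Fin l),
      (I m₀ : ℕ) = (j : ℕ) → c (⟨I, hI⟩, j) = 0 := by
    intro I hI j m₀ hm₀
    have hJ₀ : StrictMono (removeIdx m₀ I) := removeIdx_strictMono hI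
    set L : (⋀[ℂ]^(l - 1) (Tspace g a)) ⊗[ℂ] PP →ₗ[ℂ] ℂ :=
      (lamJ g a (removeIdx m₀ I)).comp (phiMap (evA g a (I m₀))) with hLdef
    have hL0 : L (F v) = 0 := by rw [hv, map_zero]
    rw [← hsum, map_sum, map_sum] at hL0
    simp only [map_smul, smul_eq_mul] at hL0
    -- value of L ∘ F on a generator
    have hterm : ∀ γ : Γ, L (F (bfun γ)) =
        ∑ m : Fin l, ((-1 : ℂ) ^ ((m : ℕ) + 1)) *
          (evA g a (I m₀) ((prymSection g a (γ.1.1 m)) * (prymCanSection g a γ.2)) *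
            lamJ g a (removeIdx m₀ I)
              (wedgeP ℂ (l - 1) fun m' => tSec g a (removeIdx m (γ.1.1) m'))) := by
      intro γ
      rw [show bfun γ = (wedgeP ℂ l fun m => tSec g a (γ.1.1 m)) ⊗ₜ[ℂ] sSec g a γ.2 from rfl]
      rw [hF (fun m => tSec g a (γ.1.1 m)) (sSec g a γ.2), map_sum]
      refine Finset.sum_congr rfl fun m _ => ?_
      rw [map_smul, smul_eq_mul]
      congr 1
      rw [removeIdx_comp m (tSec g a) γ.1.1]
      exact L_tmul g a (removeIdx m₀ I) (evA g a (I m₀)) _ _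
    -- individual terms vanish away from the distinguished index
    have termzero : ∀ (I' : Fin l → Fin (g - 1)) (hI' : StrictMono I') (j' : Fin g)
        (m : Fin l), ¬(I' = I ∧ j' = j ∧ m = m₀) →
        ((-1 : ℂ) ^ ((m : ℕ) + 1)) *
          (evA g a (I m₀) ((prymSection g a (I' m)) * (prymCanSection g a j')) *
            lamJ g a (removeIdx m₀ I)
              (wedgeP ℂ (l - 1) fun m' => tSec g a (removeIdx m I' m'))) = 0 := by
      intro I' hI' j' m hno
      by_cases h1 : I' m = I m₀
      · by_cases h2 : (j' : ℕ) = ((I m₀ : Fin (g - 1)) : ℕ)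
        · have hrm : StrictMono (removeIdx m I') := removeIdx_strictMono hI'
          have hne : removeIdx m₀ I ≠ removeIdx m I' := by
            intro hEq
            apply hno
            have hrange : Set.range I' = Set.range I := by
              rw [range_eq_insert_removeIdx m I', range_eq_insert_removeIdx m₀ I,
                ← hEq, h1]
            have hII : I' = I := strictMono_eq_of_range_eq hI' hI hrange
            have h1' : I m = I m₀ := by
              conv_lhs => rw [← hII]
              exact h1
            have hmm : m = m₀ := hI.injective h1'
            have hj : j' = j := Fin.ext (by rw [h2]; exact hm₀)
            exact ⟨hII, hj, hmm⟩
          rw [lamJ_other g a ha hJ₀ hrm hne, mul_zero, mul_zero]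
        · rw [evA_mul_can_zero g a (I m₀) _ j' h2, zero_mul, mul_zero]
      · rw [evA_mul_left_zero g a (I m₀) (I' m) h1 _, zero_mul, mul_zero]
    -- collapse the sum
    have hsingle : ∑ γ : Γ, c γ * L (F (bfun γ)) =
        c (⟨I, hI⟩, j) * L (F (bfun (⟨I, hI⟩, j))) := by
      refine Finset.sum_eq_single _ (fun γ _ hγ => ?_)
        (fun h => absurd (Finset.mem_univ _) h)
      rw [hterm γ, Finset.sum_eq_zero, mul_zero]
      intro m _
      apply termzero γ.1.1 γ.1.2 γ.2 m
      rintro ⟨hII, hjj, -⟩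
      exact hγ (Prod.ext (Subtype.ext hII) hjj)
    rw [hsingle] at hL0
    have hval : L (F (bfun (⟨I, hI⟩, j))) =
        ((-1 : ℂ) ^ ((m₀ : ℕ) + 1)) *
          (evA g a (I m₀) ((prymSection g a (I m₀)) * (prymCanSection g a j)) * 1) := by
      rw [hterm (⟨I, hI⟩, j)]
      rw [Finset.sum_eq_single m₀
        (fun m _ hm => termzero I hI j m (fun h => hm h.2.2))
        (fun h => absurd (Finset.mem_univ _) h)]
      rw [lamJ_self g a ha hJ₀]
    rw [hval] at hL0
    have hX : ((-1 : ℂ) ^ ((m₀ : ℕ) + 1)) *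
        (evA g a (I m₀) ((prymSection g a (I m₀)) * (prymCanSection g a j)) * 1) ≠ 0 := by
      refine mul_ne_zero (pow_ne_zero _ (neg_ne_zero.mpr one_ne_zero)) ?_
      rw [mul_one]
      exact evA_key_ne_zero g a ha (I m₀) j hm₀.symm
    exact (mul_eq_zero.mp hL0).resolve_right hX
  -- conclude
  rw [← hsum]
  apply Submodule.sum_mem
  intro γ _
  by_cases hγ : ∃ m, (γ.1.1 m : ℕ) = (γ.2 : ℕ)
  · obtain ⟨m₀, hm₀⟩ := hγ
    have : c γ = 0 := key γ.1.1 γ.1.2 γ.2 m₀ hm₀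
    rw [this, zero_smul]
    exact Submodule.zero_mem _
  · push_neg at hγ
    exact Submodule.smul_mem _ _
      (Submodule.subset_span ⟨γ.1.1, γ.2, γ.1.2, hγ, rfl⟩)
end
end

section
/- Let g ≥ 3, let a be an admissible canonical parameter system of genus g, and let l ≥ 1. If v ∈ V_{g,l}(a) satisfies F_l^a(v) = 0, then v lies in the subspace W spanned by the elements s_I ⊗ s_j with I = (i_1 < ⋯ < i_l), j ∉ I and j > i_1. Consequently, the restriction of F_l^a to V_{g,l}(a) is injective if and only if the restriction of F_l^a to W is injective. -/
open Polynomial TensorProduct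

set_option synthInstance.maxHeartbeats 1000000
set_option maxHeartbeats 1000000

noncomputable section

section AuxRemove

lemma removeIdx_comp {α β : Type*} {l : ℕ} (m : Fin l) (f : α → β) (v : Fin l → α) :
    removeIdx m (fun k => f (v k)) = fun k => f (removeIdx m v k) := by
  funext k
  unfold removeIdx
  split <;> rfl

lemma removeIdx_strictMono {g l : ℕ} {m : Fin l} {I : Fin l → Fin g} (hI : StrictMono I) :
    StrictMono (removeIdx m I) := by
  intro p q hpq
  have hpq' : (p : ℕ) < (q : ℕ) := hpq
  unfold removeIdx
  split_ifs with h1 h2 h2 <;> apply hI <;> exact Fin.mk_lt_mk.mpr (by omega)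

lemma range_removeIdx {g l : ℕ} (m : Fin l) (I : Fin l → Fin g) :
    insert (I m) (Set.range (removeIdx m I)) = Set.range I := by
  ext x
  simp only [Set.mem_insert_iff, Set.mem_range]
  constructor
  · rintro (rfl | ⟨k, rfl⟩)
    · exact ⟨m, rfl⟩
    · unfold removeIdx; split
      · exact ⟨_, rfl⟩
      · exact ⟨_, rfl⟩
  · rintro ⟨k, rfl⟩
    rcases Nat.lt_trichotomy (k : ℕ) (m : ℕ) with h | h | h
    · have hm := m.2
      refine Or.inr ⟨⟨(k : ℕ), by omega⟩, ?_⟩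
      have : ((⟨(k : ℕ), by omega⟩ : Fin (l - 1)) : ℕ) < (m : ℕ) := h
      simp only [removeIdx, dif_pos this]
    · exact Or.inl (congrArg I (Fin.ext h))
    · have hk := k.2
      refine Or.inr ⟨⟨(k : ℕ) - 1, by omega⟩, ?_⟩
      have hnot : ¬ (((⟨(k : ℕ) - 1, by omega⟩ : Fin (l - 1)) : ℕ) < (m : ℕ)) := by
        simp only; omega
      simp only [removeIdx, dif_neg hnot]
      congr 1
      exact Fin.ext (by simp; omega)

lemma strictMono_eq_of_removeIdx {g l : ℕ} {I I' : Fin l → Fin g} {m m' : Fin l} {j : Fin g}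
    (hI : StrictMono I) (hI' : StrictMono I') (hm : I m = j) (hm' : I' m' = j)
    (h : removeIdx m I = removeIdx m' I') : I = I' := by
  have hr : Set.range I = Set.range I' := by
    rw [← range_removeIdx m I, ← range_removeIdx m' I', hm, hm', h]
  haveI : WellFoundedLT (Fin l) := inferInstance
  exact (StrictMono.range_inj (β := Fin l) (γ := Fin g) hI hI').mp hr

end AuxRemove
section AuxDet

/-- Determinant-based linear functional separating wedges of "quasi-basis" vectors. -/
lemma det_functional {M : Type*} [AddCommGroup M] [Module ℂ M] {g : ℕ} {n : ℕ}
    (v : Fin g → M) (ξ : Fin g → (M →ₗ[ℂ] ℂ))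
    (hξ : ∀ i i', ξ i (v i') = if i = i' then 1 else 0)
    (B : Fin n → Fin g) (hB : StrictMono B) :
    ∃ lam : ExteriorAlgebra ℂ M →ₗ[ℂ] ℂ,
      ∀ J : Fin n → Fin g, StrictMono J →
        lam (ExteriorAlgebra.ιMulti ℂ n (fun k => v (J k))) = if J = B then 1 else 0 := by
  classical
  set π : M →ₗ[ℂ] (Fin n → ℂ) := LinearMap.pi (fun p => ξ (B p)) with hπ
  set detm : M [⋀^Fin n]→ₗ[ℂ] ℂ :=
    ((Pi.basisFun ℂ (Fin n)).det).compLinearMap π with hdetm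
  set fam : ∀ i, M [⋀^Fin i]→ₗ[ℂ] ℂ :=
    Function.update (fun i => (0 : M [⋀^Fin i]→ₗ[ℂ] ℂ)) n detm with hfam
  refine ⟨ExteriorAlgebra.liftAlternating fam, fun J hJ => ?_⟩
  rw [ExteriorAlgebra.liftAlternating_apply_ιMulti]
  have hfn : fam n = detm := by simp [hfam]
  rw [hfn]
  have hmat : detm (fun k => v (J k)) =
      Matrix.det (Matrix.of fun p q => if B p = J q then (1 : ℂ) else 0) := by
    rw [hdetm]
    rw [AlternatingMap.compLinearMap_apply, Module.Basis.det_apply]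
    congr 1
    ext p q
    simp [Module.Basis.toMatrix_apply, π, hξ]
  rw [hmat]
  by_cases hJB : J = B
  · rw [if_pos hJB]
    have : (Matrix.of fun p q => if B p = J q then (1 : ℂ) else 0) = 1 := by
      ext p q
      simp only [Matrix.of_apply, Matrix.one_apply, hJB]
      exact if_congr ⟨fun h => hB.injective h, fun h => congrArg B h⟩ rfl rfl
    rw [this, Matrix.det_one]
  · rw [if_neg hJB]
    -- find a row of zeros
    haveI : WellFoundedLT (Fin n) := inferInstance
    have hne : Set.range B ≠ Set.range J := by
      intro h
      exact hJB ((StrictMono.range_inj (β := Fin n) (γ := Fin g) hJ hB).mp h.symm)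
    have hex : ∃ p, B p ∉ Set.range J := by
      by_contra hc
      push_neg at hc
      apply hne
      have hsub : Finset.image B Finset.univ ⊆ Finset.image J Finset.univ := by
        intro x hx
        simp only [Finset.mem_image] at hx ⊢
        obtain ⟨p, _, rfl⟩ := hx
        obtain ⟨q, hq⟩ := hc p
        exact ⟨q, Finset.mem_univ q, hq⟩
      have hcard : (Finset.image J Finset.univ).card ≤ (Finset.image B Finset.univ).card := by
        rw [Finset.card_image_of_injective _ hJ.injective,
          Finset.card_image_of_injective _ hB.injective]
      have := Finset.eq_of_subset_of_card_le hsub hcard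
      rw [← Set.image_univ, ← Set.image_univ, ← Finset.coe_univ, ← Finset.coe_image,
        ← Finset.coe_image, this]
    obtain ⟨p, hp⟩ := hex
    apply Matrix.det_eq_zero_of_row_eq_zero p
    intro q
    have hne2 : B p ≠ J q := fun h => hp ⟨q, h.symm⟩
    simp only [Matrix.of_apply, if_neg hne2]

end AuxDet
section AuxCan

variable {g : ℕ} {a : Fin g × Fin 2 → ℂ}

/-- The first-coordinate polynomial of `canSection`. -/
def cP (a : Fin g × Fin 2 → ℂ) (i : Fin g) : Polynomial ℂ :=
  ∏ r ∈ Finset.univ.erase i, (X - C (a (r, 0)))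

lemma canSection_fst (i : Fin g) : (canSection g a i).1 = cP a i := rfl

lemma cP_eval_ne (i j : Fin g) (h : i ≠ j) : (cP a i).eval (a (j, 0)) = 0 := by
  unfold cP
  rw [Polynomial.eval_prod]
  apply Finset.prod_eq_zero (Finset.mem_erase.mpr ⟨Ne.symm h, Finset.mem_univ j⟩)
  simp

lemma cP_eval_self_ne_zero (ha : CanAdmissible g a) (i : Fin g) :
    (cP a i).eval (a (i, 0)) ≠ 0 := by
  unfold cP
  rw [Polynomial.eval_prod]
  apply Finset.prod_ne_zero_iff.mpr
  intro r hr
  simp only [Polynomial.eval_sub, Polynomial.eval_X, Polynomial.eval_C, sub_ne_zero]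
  intro hc
  exact (Finset.mem_erase.mp hr).1 (ha 0 hc.symm)

/-- Evaluation of the first coordinate at `a (j, 0)`, as a linear functional on `PP`. -/
def evP (a : Fin g × Fin 2 → ℂ) (j : Fin g) : PP →ₗ[ℂ] ℂ :=
  (Polynomial.leval (a (j, 0))).comp (LinearMap.fst ℂ (Polynomial ℂ) (Polynomial ℂ))

lemma evP_mul_canSection (i i' j : Fin g) :
    evP a j ((canSection g a i) * (canSection g a i')) =
      (cP a i).eval (a (j, 0)) * (cP a i').eval (a (j, 0)) := by
  simp [evP, Polynomial.leval_apply, canSection_fst, Prod.fst_mul, cP, canSection]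

/-- The dual functionals on `Hc g a` with `ξ i (cSec i') = δ`. -/
def xiC (a : Fin g × Fin 2 → ℂ) (i : Fin g) : (Hc g a) →ₗ[ℂ] ℂ :=
  ((cP a i).eval (a (i, 0)))⁻¹ • ((evP a i).comp (Hc g a).subtype)

lemma xiC_cSec (ha : CanAdmissible g a) (i i' : Fin g) :
    xiC a i (cSec g a i') = if i = i' then 1 else 0 := by
  have : evP a i ((cSec g a i' : PP)) = (cP a i').eval (a (i, 0)) := by
    simp [evP, Polynomial.leval_apply, cSec, canSection_fst]
  simp only [xiC, LinearMap.smul_apply, LinearMap.comp_apply, Submodule.coe_subtype, this]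
  by_cases h : i = i'
  · subst h
    rw [if_pos rfl, smul_eq_mul, inv_mul_cancel₀ (cP_eval_self_ne_zero ha i)]
  · rw [if_neg h, cP_eval_ne i' i (Ne.symm h), smul_zero]

end AuxCan
section AuxPhi

variable {g : ℕ} {a : Fin g × Fin 2 → ℂ} {l : ℕ}

lemma cSec_coe (i : Fin g) : ((cSec g a i : PP)) = canSection g a i := rfl

/-- `Φ_{j}` : post-compose the Koszul map with evaluation of the first coordinate. -/
def PhiMap (a : Fin g × Fin 2 → ℂ) (l : ℕ)
    (F : (⋀[ℂ]^l (Hc g a)) ⊗[ℂ] (Hc g a) →ₗ[ℂ] (⋀[ℂ]^(l - 1) (Hc g a)) ⊗[ℂ] PP)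
    (j : Fin g) : (⋀[ℂ]^l (Hc g a)) ⊗[ℂ] (Hc g a) →ₗ[ℂ] (⋀[ℂ]^(l - 1) (Hc g a)) :=
  (TensorProduct.rid ℂ _).toLinearMap ∘ₗ (LinearMap.lTensor _ (evP a j)) ∘ₗ F

lemma PhiMap_apply
    (F : (⋀[ℂ]^l (Hc g a)) ⊗[ℂ] (Hc g a) →ₗ[ℂ] (⋀[ℂ]^(l - 1) (Hc g a)) ⊗[ℂ] PP)
    (hF : IsCanKoszul g a l F) (j : Fin g) (v : Fin l → Hc g a) (s : Hc g a) :
    PhiMap a l F j ((wedgeP ℂ l v) ⊗ₜ[ℂ] s) =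
      ∑ m : Fin l, ((-1 : ℂ) ^ ((m : ℕ) + 1) * evP a j ((v m : PP) * (s : PP))) •
        wedgeP ℂ (l - 1) (removeIdx m v) := by
  unfold PhiMap
  simp only [LinearMap.comp_apply, LinearEquiv.coe_toLinearMap]
  rw [hF v s, map_sum, map_sum]
  refine Finset.sum_congr rfl fun m _ => ?_
  rw [map_smul, map_smul, LinearMap.lTensor_tmul, TensorProduct.rid_tmul, smul_smul]

lemma PhiMap_gen_zero
    (F : (⋀[ℂ]^l (Hc g a)) ⊗[ℂ] (Hc g a) →ₗ[ℂ] (⋀[ℂ]^(l - 1) (Hc g a)) ⊗[ℂ] PP)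
    (hF : IsCanKoszul g a l F) (j' : Fin g) (I : Fin l → Fin g) (j : Fin g)
    (hno : ∀ m, ¬(I m = j' ∧ j = j')) :
    PhiMap a l F j' ((wedgeP ℂ l fun m => cSec g a (I m)) ⊗ₜ[ℂ] cSec g a j) = 0 := by
  rw [PhiMap_apply F hF]
  apply Finset.sum_eq_zero
  intro m _
  have hz : evP a j' ((cSec g a (I m) : PP) * (cSec g a j : PP)) = 0 := by
    rw [cSec_coe, cSec_coe, evP_mul_canSection]
    rcases not_and_or.mp (hno m) with h | h
    · rw [cP_eval_ne _ _ h, zero_mul]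
    · rw [cP_eval_ne j j' h, mul_zero]
  rw [hz, mul_zero, zero_smul]

lemma PhiMap_gen_diag
    (F : (⋀[ℂ]^l (Hc g a)) ⊗[ℂ] (Hc g a) →ₗ[ℂ] (⋀[ℂ]^(l - 1) (Hc g a)) ⊗[ℂ] PP)
    (hF : IsCanKoszul g a l F) (j' : Fin g) (I : Fin l → Fin g) (hI : Function.Injective I)
    (m₀ : Fin l) (hm₀ : I m₀ = j') :
    PhiMap a l F j' ((wedgeP ℂ l fun m => cSec g a (I m)) ⊗ₜ[ℂ] cSec g a j') =
      ((-1 : ℂ) ^ ((m₀ : ℕ) + 1) * ((cP a j').eval (a (j', 0)))^2) •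
        wedgeP ℂ (l - 1) (fun k => cSec g a (removeIdx m₀ I k)) := by
  rw [PhiMap_apply F hF]
  rw [Finset.sum_eq_single m₀]
  · rw [cSec_coe, cSec_coe, evP_mul_canSection, hm₀, sq]
    congr 1
    rw [removeIdx_comp]
  · intro m _ hne
    have hIm : I m ≠ j' := fun h => hne (hI (h.trans hm₀.symm))
    rw [cSec_coe, cSec_coe, evP_mul_canSection, cP_eval_ne _ _ hIm, zero_mul, mul_zero, zero_smul]
  · intro h; exact absurd (Finset.mem_univ m₀) h

end AuxPhi
section AuxMain

variable {g : ℕ} {a : Fin g × Fin 2 → ℂ} {l : ℕ}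

/-- The "diagonal" subspace `D` spanned by the `s_I ⊗ s_j` with `j ∈ I`. -/
def Dsub (a : Fin g × Fin 2 → ℂ) (l : ℕ) :
    Submodule ℂ ((⋀[ℂ]^l (Hc g a)) ⊗[ℂ] (Hc g a)) :=
  Submodule.span ℂ
    {w | ∃ (I : Fin l → Fin g) (j : Fin g), StrictMono I ∧ (∃ m, I m = j) ∧
      w = (wedgeP ℂ l fun m => cSec g a (I m)) ⊗ₜ[ℂ] cSec g a j}

lemma Vsub_le_sup : Vsub g a l ≤ WsubC g a l ⊔ Dsub a l := by
  apply Submodule.span_le.mpr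
  rintro w ⟨I, j, hI, hle, rfl⟩
  by_cases hmem : ∃ m, I m = j
  · exact Submodule.mem_sup_right (Submodule.subset_span ⟨I, j, hI, hmem, rfl⟩)
  · push_neg at hmem
    apply Submodule.mem_sup_left
    apply Submodule.subset_span
    exact ⟨I, j, hI, hmem, fun m hm => lt_of_le_of_ne (hle m hm) (hmem m), rfl⟩

lemma WsubC_le_Vsub : WsubC g a l ≤ Vsub g a l := by
  apply Submodule.span_le.mpr
  rintro w ⟨I, j, hI, _, hlt, rfl⟩
  exact Submodule.subset_span ⟨I, j, hI, fun m hm => le_of_lt (hlt m hm), rfl⟩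

lemma WsubC_le_ker
    (F : (⋀[ℂ]^l (Hc g a)) ⊗[ℂ] (Hc g a) →ₗ[ℂ] (⋀[ℂ]^(l - 1) (Hc g a)) ⊗[ℂ] PP)
    (hF : IsCanKoszul g a l F) (j' : Fin g) :
    WsubC g a l ≤ LinearMap.ker (PhiMap a l F j') := by
  apply Submodule.span_le.mpr
  rintro w ⟨I, j, hI, hne, hlt, rfl⟩
  rw [SetLike.mem_coe, LinearMap.mem_ker]
  exact PhiMap_gen_zero F hF j' I j fun m h => hne m (h.1.trans h.2.symm)

lemma wedgeP_coe {n : ℕ} (v : Fin n → Hc g a) :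
    ((wedgeP ℂ n v : ⋀[ℂ]^n (Hc g a)) : ExteriorAlgebra ℂ (Hc g a)) =
      ExteriorAlgebra.ιMulti ℂ n v := rfl

lemma Dsub_phi_eq_zero (ha : CanAdmissible g a)
    (F : (⋀[ℂ]^l (Hc g a)) ⊗[ℂ] (Hc g a) →ₗ[ℂ] (⋀[ℂ]^(l - 1) (Hc g a)) ⊗[ℂ] PP)
    (hF : IsCanKoszul g a l F)
    (d : (⋀[ℂ]^l (Hc g a)) ⊗[ℂ] (Hc g a)) (hd : d ∈ Dsub a l)
    (hphi : ∀ j', PhiMap a l F j' d = 0) : d = 0 := by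
  classical
  rw [Dsub] at hd
  obtain ⟨c, hsupp, hsum⟩ := Submodule.mem_span_set.mp hd
  have hch : ∀ x ∈ c.support, ∃ (I : Fin l → Fin g) (j : Fin g),
      StrictMono I ∧ (∃ m, I m = j) ∧
      x = (wedgeP ℂ l fun m => cSec g a (I m)) ⊗ₜ[ℂ] cSec g a j :=
    fun x hx => hsupp hx
  choose II JJ hmono hex heq using hch
  choose mm hmm using hex
  have hczero : ∀ x₀ (hx₀ : x₀ ∈ c.support), c x₀ = 0 := by
    intro x₀ hx₀
    set j' := JJ x₀ hx₀ with hj'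
    set m₀ := mm x₀ hx₀ with hm₀def
    set B := removeIdx m₀ (II x₀ hx₀) with hB
    have hBmono : StrictMono B := removeIdx_strictMono (hmono x₀ hx₀)
    obtain ⟨lam, hlam⟩ := det_functional (cSec g a) (xiC a) (xiC_cSec ha) B hBmono
    set μ : (⋀[ℂ]^(l - 1) (Hc g a)) →ₗ[ℂ] ℂ :=
      lam ∘ₗ (⋀[ℂ]^(l - 1) (Hc g a)).subtype with hμ
    have hμw : ∀ (J : Fin (l - 1) → Fin g), StrictMono J →
        μ (wedgeP ℂ (l - 1) fun k => cSec g a (J k)) = if J = B then 1 else 0 := by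
      intro J hJ
      rw [hμ, LinearMap.comp_apply, Submodule.coe_subtype, wedgeP_coe]
      exact hlam J hJ
    set e : ℂ := (cP a j').eval (a (j', 0)) with he
    set κ : ℂ := (-1 : ℂ) ^ ((m₀ : ℕ) + 1) * e ^ 2 with hκ
    have hκne : κ ≠ 0 := by
      apply mul_ne_zero
      · exact pow_ne_zero _ (neg_ne_zero.mpr one_ne_zero)
      · exact pow_ne_zero _ (cP_eval_self_ne_zero ha j')
    have hclaim : ∀ x ∈ c.support,
        μ (PhiMap a l F j' x) = if x = x₀ then κ else 0 := by
      intro x hx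
      by_cases hJx : JJ x hx = j'
      · -- diagonal case
        have hIinj : Function.Injective (II x hx) := (hmono x hx).injective
        have hIm : II x hx (mm x hx) = j' := (hmm x hx).trans hJx
        have hdiag := PhiMap_gen_diag F hF j' (II x hx) hIinj (mm x hx) hIm
        have hL : μ (PhiMap a l F j' x) =
            ((-1 : ℂ) ^ ((mm x hx : ℕ) + 1) * ((cP a j').eval (a (j', 0))) ^ 2) *
              (if removeIdx (mm x hx) (II x hx) = B then 1 else 0) := by
          conv_lhs => rw [heq x hx, hJx]
          rw [hdiag, map_smul, hμw _ (removeIdx_strictMono (hmono x hx)), smul_eq_mul]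
        rw [hL]
        have hm0 : II x₀ hx₀ m₀ = j' := hmm x₀ hx₀
        by_cases hR : removeIdx (mm x hx) (II x hx) = B
        · have hII : II x hx = II x₀ hx₀ :=
            strictMono_eq_of_removeIdx (hmono x hx) (hmono x₀ hx₀) hIm hm0 hR
          have hxx : x = x₀ := by
            rw [heq x hx, heq x₀ hx₀, hII, hJx, hj']
          have h1 : II x₀ hx₀ (mm x hx) = j' := by rw [← hII]; exact hIm
          have hmmx : mm x hx = m₀ := (hmono x₀ hx₀).injective (h1.trans hm0.symm)
          rw [if_pos hR, if_pos hxx, mul_one, hmmx, hκ, he]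
        · have hxx : x ≠ x₀ := by
            intro hxeq
            subst hxeq
            exact hR rfl
          rw [if_neg hR, if_neg hxx, mul_zero]
      · -- off-diagonal case
        have hz := PhiMap_gen_zero F hF j' (II x hx) (JJ x hx)
          (fun m h => hJx h.2)
        have hxx : x ≠ x₀ := by
          intro hxeq
          subst hxeq
          exact hJx rfl
        have hL : μ (PhiMap a l F j' x) = 0 := by
          conv_lhs => rw [heq x hx]
          rw [hz, map_zero]
        rw [hL, if_neg hxx]
    have hzero : (0 : ℂ) = ∑ x ∈ c.support, c x * μ (PhiMap a l F j' x) := by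
      have : PhiMap a l F j' d = PhiMap a l F j' (c.sum fun mi r => r • mi) := by rw [hsum]
      rw [hphi j'] at this
      rw [Finsupp.sum] at this
      rw [map_sum] at this
      calc (0 : ℂ) = μ 0 := (map_zero μ).symm
        _ = μ (∑ x ∈ c.support, PhiMap a l F j' (c x • x)) := by rw [← this]
        _ = ∑ x ∈ c.support, c x * μ (PhiMap a l F j' x) := by
            rw [map_sum]
            refine Finset.sum_congr rfl fun x _ => ?_
            rw [map_smul, map_smul, smul_eq_mul]
    have : (0 : ℂ) = c x₀ * κ := by
      rw [hzero, Finset.sum_congr rfl fun x hx => by rw [hclaim x hx]]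
      rw [show (∑ x ∈ c.support, c x * if x = x₀ then κ else 0)
          = ∑ x ∈ c.support, if x = x₀ then c x * κ else 0 from
        Finset.sum_congr rfl fun x _ => by split <;> simp]
      rw [Finset.sum_ite_eq' c.support x₀ fun x => c x * κ, if_pos hx₀]
    exact (mul_eq_zero.mp this.symm).resolve_right hκne
  have hc0 : c = 0 := by
    ext x
    by_cases hx : x ∈ c.support
    · exact hczero x hx
    · exact Finsupp.notMem_support_iff.mp hx
  rw [← hsum, hc0, Finsupp.sum_zero_index]

end AuxMain
/-- Remark `W_i` for canonical binary curves: the kernel of the restriction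
of `F_l^a` to `V_{g,l}(a)` is contained in the span `W` of the `s_I ⊗ s_j` with `j ∉ I` and
`j > i_1`; consequently `F_l^a` is injective on `V_{g,l}(a)` iff it is injective on `W`. -/
theorem statement7 (g : ℕ) (hg : 3 ≤ g) (a : Fin g × Fin 2 → ℂ) (ha : CanAdmissible g a)
    (l : ℕ) (hl : 1 ≤ l)
    (F : (⋀[ℂ]^l (Hc g a)) ⊗[ℂ] (Hc g a) →ₗ[ℂ] (⋀[ℂ]^(l - 1) (Hc g a)) ⊗[ℂ] PP)
    (hF : IsCanKoszul g a l F) :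
    (∀ v ∈ Vsub g a l, F v = 0 → v ∈ WsubC g a l) ∧
    (Set.InjOn F (Vsub g a l : Set _) ↔ Set.InjOn F (WsubC g a l : Set _)) := by
  have part1 : ∀ v ∈ Vsub g a l, F v = 0 → v ∈ WsubC g a l := by
    intro v hv hFv
    obtain ⟨w, hw, d, hd, hwd⟩ := Submodule.mem_sup.mp (Vsub_le_sup hv)
    have hphiv : ∀ j', PhiMap a l F j' v = 0 := by
      intro j'
      unfold PhiMap
      simp only [LinearMap.comp_apply, hFv, map_zero]
    have hphiw : ∀ j', PhiMap a l F j' w = 0 := fun j' =>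
      LinearMap.mem_ker.mp (WsubC_le_ker F hF j' hw)
    have hphid : ∀ j', PhiMap a l F j' d = 0 := by
      intro j'
      have h := congrArg (PhiMap a l F j') hwd
      rw [map_add, hphiw j', hphiv j', zero_add] at h
      exact h
    have hd0 : d = 0 := Dsub_phi_eq_zero ha F hF d hd hphid
    rw [← hwd, hd0, add_zero]
    exact hw
  refine ⟨part1, ?_⟩
  constructor
  · intro hinj
    exact hinj.mono (SetLike.coe_subset_coe.mpr WsubC_le_Vsub)
  · intro hinj x hx y hy hxy
    have hsub : x - y ∈ Vsub g a l :=
      @Submodule.sub_mem ℂ _ _ _ _ (Vsub g a l) x y hx hy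
    have hFxy : F (x - y) = 0 := by rw [map_sub, hxy, sub_self]
    have hW : x - y ∈ WsubC g a l := part1 _ hsub hFxy
    have h0 : (0 : (⋀[ℂ]^l (Hc g a)) ⊗[ℂ] (Hc g a)) ∈ WsubC g a l := Submodule.zero_mem _
    have heq0 : x - y = 0 := hinj hW h0 (by rw [hFxy, map_zero])
    exact sub_eq_zero.mp heq0
end
end

section
/- (Projection of the Prym-canonical model from a node.) Let g ≥ 6, k = ⌊g/2⌋, let a be an admissible Prym parameter system of genus g, and let r be an index with 1 ≤ r ≤ k if g is even, and k+1 ≤ r ≤ g−1 if g is odd. Let a′ be the admissible Prym parameter system of genus g−1 defined by a′_{i,j} = a_{i,j} for i ≤ r−1 and a′_{i,j} = a_{i+1,j} for i ≥ r (j = 1,2), and let σ(i) = i for i < r, σ(i) = i−1 for i > r. Then for every i ≠ r (1 ≤ i ≤ g−1) and j = 1,2 one has p^a_{i,j}(t) = c_i · (t − a_{r,j}) · p^{a′}_{σ(i),j}(t), where c_i = 1 if i ≤ k and c_i = 1/a_{r,2} if i ≥ k+1. In particular, componentwise multiplication by (t−a_{r,1}, t−a_{r,2}) maps T_{g−1}(a′)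 injectively into T_g(a), sending the basis vector t^{a′}_{σ(i)} to c_i^{−1} t^a_i. -/
open Polynomial TensorProduct

set_option synthInstance.maxHeartbeats 1000000
set_option maxHeartbeats 1000000

noncomputable section

section Aux

def embF (g : ℕ) (r : Fin (g - 1)) (s : Fin (g - 1 - 1)) : Fin (g - 1) :=
  if h : (s : ℕ) < (r : ℕ) then ⟨s, by have := r.2; omega⟩
  else ⟨(s : ℕ) + 1, by have := s.2; omega⟩

def invF (g : ℕ) (hg : 3 ≤ g) (r : Fin (g - 1)) (s : Fin (g - 1)) : Fin (g - 1 - 1) :=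
  if h : (s : ℕ) < (r : ℕ) then ⟨s, by have := r.2; omega⟩
  else ⟨(s : ℕ) - 1, by have := s.2; omega⟩

lemma embF_val (g : ℕ) (r : Fin (g - 1)) (s : Fin (g - 1 - 1)) :
    (embF g r s : ℕ) = if (s : ℕ) < (r : ℕ) then (s : ℕ) else (s : ℕ) + 1 := by
  unfold embF; split <;> rfl

lemma invF_val (g : ℕ) (hg : 3 ≤ g) (r : Fin (g - 1)) (s : Fin (g - 1)) :
    (invF g hg r s : ℕ) = if (s : ℕ) < (r : ℕ) then (s : ℕ) else (s : ℕ) - 1 := by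
  unfold invF; split <;> rfl

lemma embF_ne (g : ℕ) (r : Fin (g - 1)) (s : Fin (g - 1 - 1)) : embF g r s ≠ r := by
  intro h; rw [Fin.ext_iff, embF_val] at h; split at h <;> omega

lemma prymDelete_apply (g : ℕ) (a : Fin (g - 1) × Fin 2 → ℂ) (r : Fin (g - 1))
    (s : Fin (g - 1 - 1)) (j : Fin 2) :
    prymDelete g a r (s, j) = a (embF g r s, j) := by
  unfold prymDelete embF; split <;> rfl

lemma reindex_prod {M : Type*} [CommMonoid M] (g : ℕ) (hg : 3 ≤ g)
    (a : Fin (g - 1) × Fin 2 → ℂ) (r : Fin (g - 1)) (j : Fin 2) (f : ℂ → M)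
    (S : Finset (Fin (g - 1))) (T : Finset (Fin (g - 1 - 1)))
    (hrS : r ∉ S)
    (hmem : ∀ s : Fin (g - 1 - 1), s ∈ T ↔ embF g r s ∈ S) :
    ∏ s ∈ S, f (a (s, j)) = ∏ s ∈ T, f (prymDelete g a r (s, j)) := by
  have hinv : ∀ s : Fin (g - 1), s ≠ r → embF g r (invF g hg r s) = s := by
    intro s hsr
    have hsr' : (s : ℕ) ≠ (r : ℕ) := fun h => hsr (Fin.ext h)
    rw [Fin.ext_iff, embF_val, invF_val]
    have := s.2; have := r.2
    split_ifs with h1 h2 <;> simp_all [invF_val] <;> omega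
  have hinv2 : ∀ s : Fin (g - 1 - 1), invF g hg r (embF g r s) = s := by
    intro s
    rw [Fin.ext_iff, invF_val, embF_val]
    have := s.2
    split_ifs <;> omega
  refine Finset.prod_nbij' (invF g hg r) (embF g r) ?_ ?_ ?_ ?_ ?_
  · intro s hs
    have hsr : s ≠ r := fun h => hrS (h ▸ hs)
    rw [hmem, hinv s hsr]; exact hs
  · intro s hs; exact (hmem s).mp hs
  · intro s hs; exact hinv s (fun h => hrS (h ▸ hs))
  · intro s _; exact hinv2 s
  · intro s hs
    have hsr : s ≠ r := fun h => hrS (h ▸ hs)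
    rw [prymDelete_apply, hinv s hsr]

end Aux

/-- projection of the Prym-canonical model from the node `P_r`: with
`a'` the deleted parameter system and `σ(i)` the index shift (`σ(i) = i` for `i < r`,
`σ(i) = i - 1` for `i > r`, encoded by the hypotheses on `i'`), one has
`p^a_{i,j} = c_i (t - a_{r,j}) p^{a'}_{σ(i),j}` with `c_i = 1` for `i ≤ k` and
`c_i = 1/a_{r,2}` for `i ≥ k+1`; in particular componentwise multiplication by
`(t - a_{r,1}, t - a_{r,2})` maps `T_{g-1}(a')` injectively into `T_g(a)` and sends
`t^{a'}_{σ(i)}` to `c_i⁻¹ t^a_i`. -/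
theorem statement10 (g : ℕ) (hg : 6 ≤ g) (a : Fin (g - 1) × Fin 2 → ℂ)
    (ha : PrymAdmissible g a) (r : Fin (g - 1))
    (hrE : Even g → (r : ℕ) < g / 2) (hrO : Odd g → g / 2 ≤ (r : ℕ)) :
    (∀ i : Fin (g - 1), i ≠ r → ∀ (j : Fin 2) (i' : Fin (g - 1 - 1)),
      ((i : ℕ) < (r : ℕ) → (i' : ℕ) = (i : ℕ)) →
      ((r : ℕ) < (i : ℕ) → (i' : ℕ) + 1 = (i : ℕ)) →
      prymPoly g a i j =
        C (if (i : ℕ) < g / 2 then 1 else (a (r, 1))⁻¹) *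
          ((X - C (a (r, j))) * prymPoly (g - 1) (prymDelete g a r) i' j)) ∧
    (∀ x ∈ Tspace (g - 1) (prymDelete g a r),
      mulPair (X - C (a (r, 0)), X - C (a (r, 1))) x ∈ Tspace g a) ∧
    Set.InjOn (mulPair (X - C (a (r, 0)), X - C (a (r, 1))))
      (Tspace (g - 1) (prymDelete g a r) : Set PP) ∧
    (∀ i : Fin (g - 1), i ≠ r → ∀ i' : Fin (g - 1 - 1),
      ((i : ℕ) < (r : ℕ) → (i' : ℕ) = (i : ℕ)) →
      ((r : ℕ) < (i : ℕ) → (i' : ℕ) + 1 = (i : ℕ)) →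
      mulPair (X - C (a (r, 0)), X - C (a (r, 1)))
          (prymSection (g - 1) (prymDelete g a r) i') =
        (if (i : ℕ) < g / 2 then (1 : ℂ) else (a (r, 1))⁻¹)⁻¹ • prymSection g a i) := by

  have hg3 : 3 ≤ g := by omega
  set a' := prymDelete g a r with ha'
  have ha'nz : ∀ p, a' p ≠ 0 := by
    rintro ⟨s, j⟩
    rw [ha', prymDelete_apply]
    exact ha.1 _
  have hAnz : ∀ jj : Fin 2, prymA g a jj ≠ 0 := fun jj =>
    Finset.prod_ne_zero_iff.mpr fun s _ => ha.1 _
  have hA'nz : ∀ jj : Fin 2, prymA (g - 1) a' jj ≠ 0 := fun jj =>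
    Finset.prod_ne_zero_iff.mpr fun s _ => ha'nz _
  have hA : ∀ jj : Fin 2, prymA g a jj = a (r, jj) * prymA (g - 1) a' jj := by
    intro jj
    unfold prymA
    rw [← Finset.mul_prod_erase _ _ (Finset.mem_univ r)]
    congr 1
    exact reindex_prod g hg3 a r jj (fun c => c) (Finset.univ.erase r) Finset.univ
      (Finset.notMem_erase r _)
      (fun s => by simp [Finset.mem_erase, embF_ne])
  have hembeq : ∀ (i : Fin (g - 1)), i ≠ r → ∀ (i' : Fin (g - 1 - 1)),
      ((i : ℕ) < (r : ℕ) → (i' : ℕ) = (i : ℕ)) →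
      ((r : ℕ) < (i : ℕ) → (i' : ℕ) + 1 = (i : ℕ)) → embF g r i' = i := by
    intro i hir i' h1 h2
    have hir' : (i : ℕ) ≠ (r : ℕ) := fun h => hir (Fin.ext h)
    rw [Fin.ext_iff, embF_val]
    split_ifs <;> omega
  have hprod : ∀ (i : Fin (g - 1)), i ≠ r → ∀ (j : Fin 2) (i' : Fin (g - 1 - 1)),
      ((i : ℕ) < (r : ℕ) → (i' : ℕ) = (i : ℕ)) →
      ((r : ℕ) < (i : ℕ) → (i' : ℕ) + 1 = (i : ℕ)) →
      ∏ s ∈ Finset.univ.erase i, (X - C (a (s, j))) =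
        (X - C (a (r, j))) * ∏ s ∈ Finset.univ.erase i', (X - C (a' (s, j))) := by
    intro i hir j i' h1 h2
    have hir' : (i : ℕ) ≠ (r : ℕ) := fun h => hir (Fin.ext h)
    have hr_mem : r ∈ Finset.univ.erase i :=
      Finset.mem_erase.mpr ⟨Ne.symm hir, Finset.mem_univ r⟩
    rw [← Finset.mul_prod_erase _ _ hr_mem]
    congr 1
    refine reindex_prod g hg3 a r j (fun c => X - C c)
      ((Finset.univ.erase i).erase r) (Finset.univ.erase i')
      (Finset.notMem_erase r _) ?_
    intro s
    simp only [Finset.mem_erase, Finset.mem_univ, and_true]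
    constructor
    · intro hs
      refine ⟨embF_ne g r s, ?_⟩
      intro h
      rw [Fin.ext_iff, embF_val] at h
      have hs' : (s : ℕ) ≠ (i' : ℕ) := fun hh => hs (Fin.ext hh)
      split_ifs at h <;> omega
    · rintro ⟨-, h⟩
      intro heq
      apply h
      rw [Fin.ext_iff, embF_val]
      rw [Fin.ext_iff] at heq
      split_ifs <;> omega
  have hbranch : ∀ (i : Fin (g - 1)), i ≠ r → ∀ (i' : Fin (g - 1 - 1)),
      ((i : ℕ) < (r : ℕ) → (i' : ℕ) = (i : ℕ)) →
      ((r : ℕ) < (i : ℕ) → (i' : ℕ) + 1 = (i : ℕ)) →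
      ((i : ℕ) < g / 2 ↔ (i' : ℕ) < (g - 1) / 2) := by
    intro i hir i' h1 h2
    have hir' : (i : ℕ) ≠ (r : ℕ) := fun h => hir (Fin.ext h)
    have hi := i.2; have hr := r.2; have hi' := i'.2
    rcases Nat.even_or_odd g with he | ho
    · have := hrE he
      have h2e : g % 2 = 0 := Nat.even_iff.mp he
      omega
    · have := hrO ho
      have h2o : g % 2 = 1 := Nat.odd_iff.mp ho
      omega
  have P1 : ∀ i : Fin (g - 1), i ≠ r → ∀ (j : Fin 2) (i' : Fin (g - 1 - 1)),
      ((i : ℕ) < (r : ℕ) → (i' : ℕ) = (i : ℕ)) →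
      ((r : ℕ) < (i : ℕ) → (i' : ℕ) + 1 = (i : ℕ)) →
      prymPoly g a i j =
        C (if (i : ℕ) < g / 2 then 1 else (a (r, 1))⁻¹) *
          ((X - C (a (r, j))) * prymPoly (g - 1) a' i' j) := by
    intro i hir j i' h1 h2
    have hpr := hprod i hir j i' h1 h2
    unfold prymPoly
    by_cases hk : (i : ℕ) < g / 2
    · rw [if_pos hk, if_pos ((hbranch i hir i' h1 h2).mp hk), if_pos hk, hpr]
      simp only [map_one, one_mul]
      ring
    · rw [if_neg hk, if_neg (fun h => hk ((hbranch i hir i' h1 h2).mpr h)), if_neg hk, hpr]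
      have ha'i : a' (i', j) = a (i, j) := by
        rw [ha', prymDelete_apply, hembeq i hir i' h1 h2]
      have hC : C (-prymD g a j * a (i, j) / prymA g a j) =
          C (a (r, 1))⁻¹ * C (-prymD (g - 1) a' j * a' (i', j) / prymA (g - 1) a' j) := by
        rw [← C_mul]
        congr 1
        rw [ha'i]
        have e0 := hA 0
        have e1 := hA 1
        have n0 := hAnz 0; have n1 := hAnz 1
        have n0' := hA'nz 0; have n1' := hA'nz 1
        have nr1 : a (r, 1) ≠ 0 := ha.1 _
        fin_cases j
        · unfold prymD
          simp only [Fin.zero_eta, Fin.isValue, if_true, if_false, reduceIte]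
          have nr0 : a (r, 0) ≠ 0 := ha.1 _
          rw [e0, e1]
          field_simp
        · unfold prymD
          simp only [Fin.mk_one, Fin.isValue, one_ne_zero, if_true, if_false, reduceIte]
          rw [e1]
          field_simp
      rw [hC]
      ring
  have P4 : ∀ i : Fin (g - 1), i ≠ r → ∀ i' : Fin (g - 1 - 1),
      ((i : ℕ) < (r : ℕ) → (i' : ℕ) = (i : ℕ)) →
      ((r : ℕ) < (i : ℕ) → (i' : ℕ) + 1 = (i : ℕ)) →
      mulPair (X - C (a (r, 0)), X - C (a (r, 1)))
          (prymSection (g - 1) a' i') =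
        (if (i : ℕ) < g / 2 then (1 : ℂ) else (a (r, 1))⁻¹)⁻¹ • prymSection g a i := by
    intro i hir i' h1 h2
    have hc : (if (i : ℕ) < g / 2 then (1 : ℂ) else (a (r, 1))⁻¹) ≠ 0 := by
      split
      · exact one_ne_zero
      · exact inv_ne_zero (ha.1 _)
    have e0 := P1 i hir 0 i' h1 h2
    have e1 := P1 i hir 1 i' h1 h2
    set c := if (i : ℕ) < g / 2 then (1 : ℂ) else (a (r, 1))⁻¹ with hcdef
    have key : ∀ j : Fin 2, (X - C (a (r, j))) * prymPoly (g - 1) a' i' j =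
        c⁻¹ • prymPoly g a i j := by
      intro j
      have ej := P1 i hir j i' h1 h2
      rw [Polynomial.smul_eq_C_mul, ej, ← mul_assoc, ← C_mul,
        inv_mul_cancel₀ hc, map_one, one_mul]
    have k0 := key 0
    have k1 := key 1
    exact Prod.ext k0 k1
  refine ⟨P1, ?_, ?_, P4⟩
  · intro x hx
    have hle : Tspace (g - 1) a' ≤
        Submodule.comap (mulPair (X - C (a (r, 0)), X - C (a (r, 1)))) (Tspace g a) := by
      rw [Tspace, Submodule.span_le]
      rintro _ ⟨i'', rfl⟩
      have hi := i''.2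
      have hr := r.2
      set i : Fin (g - 1) := embF g r i'' with hidef
      have h1 : (i : ℕ) < (r : ℕ) → (i'' : ℕ) = (i : ℕ) := by
        rw [hidef, embF_val]; split_ifs <;> omega
      have h2 : (r : ℕ) < (i : ℕ) → (i'' : ℕ) + 1 = (i : ℕ) := by
        rw [hidef, embF_val]; split_ifs <;> omega
      rw [SetLike.mem_coe, Submodule.mem_comap, P4 i (embF_ne g r i'') i'' h1 h2]
      exact Submodule.smul_mem _ _ (Submodule.subset_span ⟨i, rfl⟩)
    exact hle hx
  · intro x _ y _ h
    have h0 : (X - C (a (r, 0))) * x.1 = (X - C (a (r, 0))) * y.1 := congrArg Prod.fst h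
    have h1 : (X - C (a (r, 1))) * x.2 = (X - C (a (r, 1))) * y.2 := congrArg Prod.snd h
    exact Prod.ext (mul_left_cancel₀ (X_sub_C_ne_zero _) h0)
      (mul_left_cancel₀ (X_sub_C_ne_zero _) h1)
end
end

section
/- Let g ≥ 5, let a be an admissible Prym parameter system of genus g, let 1 ≤ r ≤ g−1, and let a′ be the admissible Prym parameter system of genus g−1 defined by a′_{i,j} = a_{i,j} for i ≤ r−1 and a′_{i,j} = a_{i+1,j} for i ≥ r (j = 1,2). Then componentwise multiplication by (t−a_{r,1}, t−a_{r,2}) maps H_{g−1}(a′) injectively into H_g(a); explicitly, it sends the basis vector s^{a′}_{j′} to s^a_{j′} for j′ ≤ r−1, to s^a_{j′+1} for r ≤ j′ ≤ g−2, and s^{a′}_{g−1} to s^a_g. -/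
open Polynomial TensorProduct

set_option synthInstance.maxHeartbeats 1000000
set_option maxHeartbeats 1000000

noncomputable section

/-- The embedding `Fin (g-1-1) → Fin (g-1)` skipping `r`. -/
def prymEmb (g : ℕ) (r : Fin (g - 1)) (i : Fin (g - 1 - 1)) : Fin (g - 1) :=
  if h : (i : ℕ) < (r : ℕ) then ⟨i, by have := r.2; omega⟩
  else ⟨(i : ℕ) + 1, by have := i.2; have := r.2; omega⟩

lemma prymEmb_val (g : ℕ) (r : Fin (g - 1)) (i : Fin (g - 1 - 1)) :
    (prymEmb g r i : ℕ) = if (i : ℕ) < (r : ℕ) then (i : ℕ) else (i : ℕ) + 1 := by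
  unfold prymEmb; split <;> simp

lemma prymDelete_eq (g : ℕ) (a : Fin (g - 1) × Fin 2 → ℂ) (r : Fin (g - 1))
    (i : Fin (g - 1 - 1)) (j : Fin 2) :
    prymDelete g a r (i, j) = a (prymEmb g r i, j) := by
  unfold prymDelete prymEmb; split <;> rfl

lemma prymEmb_inj (g : ℕ) (r : Fin (g - 1)) : Function.Injective (prymEmb g r) := by
  intro i j h
  have h' : (prymEmb g r i : ℕ) = (prymEmb g r j : ℕ) := by rw [h]
  rw [prymEmb_val, prymEmb_val] at h'
  apply Fin.ext
  split_ifs at h' <;> omega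

lemma prymEmb_ne (g : ℕ) (r : Fin (g - 1)) (i : Fin (g - 1 - 1)) : prymEmb g r i ≠ r := by
  intro h
  have h' : (prymEmb g r i : ℕ) = (r : ℕ) := by rw [h]
  rw [prymEmb_val] at h'
  split_ifs at h' <;> omega

lemma prymEmb_image (g : ℕ) (r : Fin (g - 1)) :
    Finset.image (prymEmb g r) Finset.univ = Finset.univ.erase r := by
  apply Finset.eq_of_subset_of_card_le
  · intro x hx
    simp only [Finset.mem_image] at hx
    obtain ⟨i, -, rfl⟩ := hx
    exact Finset.mem_erase.2 ⟨prymEmb_ne g r i, Finset.mem_univ _⟩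
  · rw [Finset.card_erase_of_mem (Finset.mem_univ r),
      Finset.card_image_of_injective _ (prymEmb_inj g r)]
    simp

lemma prym_prod_full (g : ℕ) (a : Fin (g - 1) × Fin 2 → ℂ) (r : Fin (g - 1)) (j : Fin 2) :
    (X - C (a (r, j))) * ∏ i : Fin (g - 1 - 1), (X - C (prymDelete g a r (i, j))) =
      ∏ s : Fin (g - 1), (X - C (a (s, j))) := by
  have h1 : ∏ i : Fin (g - 1 - 1), (X - C (prymDelete g a r (i, j))) =
      ∏ s ∈ Finset.univ.erase r, (X - C (a (s, j))) := by
    rw [← prymEmb_image g r,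
      Finset.prod_image (fun x _ y _ h => prymEmb_inj g r h)]
    simp [prymDelete_eq]
  rw [h1]
  exact Finset.mul_prod_erase Finset.univ (fun s => X - C (a (s, j))) (Finset.mem_univ r)

lemma prym_prod_erase (g : ℕ) (a : Fin (g - 1) × Fin 2 → ℂ) (r : Fin (g - 1)) (j : Fin 2)
    (j' : Fin (g - 1 - 1)) :
    (X - C (a (r, j))) *
        ∏ i ∈ Finset.univ.erase j', (X - C (prymDelete g a r (i, j))) =
      ∏ s ∈ Finset.univ.erase (prymEmb g r j'), (X - C (a (s, j))) := by
  have h1 : ∏ i ∈ Finset.univ.erase j', (X - C (prymDelete g a r (i, j))) =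
      ∏ s ∈ (Finset.univ.erase r).erase (prymEmb g r j'), (X - C (a (s, j))) := by
    rw [← prymEmb_image g r, ← Finset.image_erase (prymEmb_inj g r),
      Finset.prod_image (fun x _ y _ h => prymEmb_inj g r h)]
    simp [prymDelete_eq]
  have h2 : (Finset.univ.erase r).erase (prymEmb g r j') =
      (Finset.univ.erase (prymEmb g r j')).erase r := Finset.erase_right_comm
  rw [h1, h2]
  exact Finset.mul_prod_erase _ (fun s => X - C (a (s, j)))
    (Finset.mem_erase.2 ⟨Ne.symm (prymEmb_ne g r j'), Finset.mem_univ r⟩)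

lemma prym_section_mul (g : ℕ) (hg : 5 ≤ g) (a : Fin (g - 1) × Fin 2 → ℂ)
    (r : Fin (g - 1)) (j' : Fin (g - 1)) (j : Fin g)
    (h1 : (j' : ℕ) < (r : ℕ) → (j : ℕ) = (j' : ℕ))
    (h2 : (r : ℕ) ≤ (j' : ℕ) → (j' : ℕ) < g - 2 → (j : ℕ) = (j' : ℕ) + 1)
    (h3 : (j' : ℕ) = g - 2 → (j : ℕ) = g - 1) :
    mulPair (X - C (a (r, 0)), X - C (a (r, 1)))
        (prymCanSection (g - 1) (prymDelete g a r) j') = prymCanSection g a j := by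
  have hr := r.2
  have hj' := j'.2
  simp only [mulPair, LinearMap.mulLeft_apply]
  by_cases hc : (j' : ℕ) < g - 1 - 1
  · -- j' is not the last index
    set j'' : Fin (g - 1 - 1) := ⟨j', hc⟩ with hj''
    have hv : (j'' : ℕ) = (j' : ℕ) := rfl
    have hjval : (j : ℕ) = (prymEmb g r j'' : ℕ) := by
      rw [prymEmb_val]
      split_ifs with h
      · have := h1 (by omega); omega
      · have := h2 (by omega) (by omega); omega
    have hjlt : (j : ℕ) < g - 1 := by
      rw [hjval, prymEmb_val]; split_ifs <;> omega
    rw [prymCanSection, prymCanSection, dif_pos hc, dif_pos hjlt]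
    have hfin : (⟨(j : ℕ), hjlt⟩ : Fin (g - 1)) = prymEmb g r j'' := Fin.ext hjval
    have e0 := prym_prod_erase g a r 0 j''
    have e1 := prym_prod_erase g a r 1 j''
    have hj''2 : (⟨(j' : ℕ), hc⟩ : Fin (g - 1 - 1)) = j'' := rfl
    rw [Prod.mk_mul_mk, Prod.mk.injEq]
    constructor
    · rw [hfin, ← e0, hj''2]; ring
    · rw [hfin, ← e1, hj''2]; ring
  · -- j' is the last index, j = g - 1
    have hc' : ¬ ((j : ℕ) < g - 1) := by
      have := h3 (by omega); omega
    rw [prymCanSection, prymCanSection, dif_neg hc, dif_neg hc']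
    have e0 := prym_prod_full g a r 0
    have e1 := prym_prod_full g a r 1
    rw [Prod.mk_mul_mk, Prod.mk.injEq]
    constructor
    · simpa only [prymM] using e0
    · simp only [prymM]; rw [mul_neg, e1]

/-- componentwise multiplication by `(t - a_{r,1}, t - a_{r,2})` maps
`H_{g-1}(a')` injectively into `H_g(a)`, sending `s^{a'}_{j'}` to `s^a_{j'}` for `j' ≤ r-1`,
to `s^a_{j'+1}` for `r ≤ j' ≤ g-2`, and `s^{a'}_{g-1}` to `s^a_g` (all `1`-based; the target
index `j` is encoded by the hypotheses). -/
theorem statement11 (g : ℕ) (hg : 5 ≤ g) (a : Fin (g - 1) × Fin 2 → ℂ)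
    (ha : PrymAdmissible g a) (r : Fin (g - 1)) :
    (∀ x ∈ Hspace (g - 1) (prymDelete g a r),
      mulPair (X - C (a (r, 0)), X - C (a (r, 1))) x ∈ Hspace g a) ∧
    Set.InjOn (mulPair (X - C (a (r, 0)), X - C (a (r, 1))))
      (Hspace (g - 1) (prymDelete g a r) : Set PP) ∧
    ∀ (j' : Fin (g - 1)) (j : Fin g),
      ((j' : ℕ) < (r : ℕ) → (j : ℕ) = (j' : ℕ)) →
      ((r : ℕ) ≤ (j' : ℕ) → (j' : ℕ) < g - 2 → (j : ℕ) = (j' : ℕ) + 1) →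
      ((j' : ℕ) = g - 2 → (j : ℕ) = g - 1) →
      mulPair (X - C (a (r, 0)), X - C (a (r, 1)))
          (prymCanSection (g - 1) (prymDelete g a r) j') = prymCanSection g a j := by
  refine ⟨?_, ?_, fun j' j h1 h2 h3 => prym_section_mul g hg a r j' j h1 h2 h3⟩
  · -- maps H_{g-1}(a') into H_g(a)
    intro x hx
    refine Submodule.span_induction ?_ ?_ ?_ ?_ hx
    · rintro p ⟨j', rfl⟩
      have hr := r.2
      have hj' := j'.2
      set jv : ℕ := if (j' : ℕ) = g - 2 then g - 1
        else if (j' : ℕ) < (r : ℕ) then (j' : ℕ) else (j' : ℕ) + 1 with hjv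
      have hjvlt : jv < g := by rw [hjv]; split_ifs <;> omega
      have := prym_section_mul g hg a r j' ⟨jv, hjvlt⟩
        (by intro h; simp only [hjv]; rw [if_neg (by omega), if_pos h])
        (by intro h h'; simp only [hjv]; rw [if_neg (by omega), if_neg (by omega)])
        (by intro h; simp only [hjv]; rw [if_pos h])
      rw [this]
      exact Submodule.subset_span ⟨⟨jv, hjvlt⟩, rfl⟩
    · simp
    · intro p q _ _ hp hq
      rw [map_add]; exact Submodule.add_mem _ hp hq
    · intro c p _ hp
      rw [map_smul]; exact Submodule.smul_mem _ c hp
  · -- injectivity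
    intro x _ y _ h
    simp only [mulPair, LinearMap.mulLeft_apply, Prod.mul_def, Prod.mk.injEq] at h
    exact Prod.ext (mul_left_cancel₀ (X_sub_C_ne_zero _) h.1)
      (mul_left_cancel₀ (X_sub_C_ne_zero _) h.2)
end
end

section
/- Let g ≥ 5 and let a be an admissible Prym parameter system of genus g. Then the g canonical sections s_1,…,s_g are linearly independent, and their span H_g(a) equals the space of all pairs (f_1, f_2) of polynomials of degree ≤ g−1 satisfying the residue conditions: f_1(a_{i,1})/(a_{i,1}·∏_{r≠i}(a_{i,1}−a_{r,1})) + f_2(a_{i,2})/(a_{i,2}·∏_{r≠i}(a_{i,2}−a_{r,2})) = 0 for each i = 1,…,g−1, and f_1(0)/M_1(0) + f_2(0)/M_2(0) = 0. In particular this space has dimension exactly g (it realizes H^0(C, ω_C), the space of sections of the dualizing sheaf of the binary curve C of genus g determined by a, described as pairs of meromorphic differentials f_j(t)dt/(t·M_j(t)) with opposite residues at the identified nodes). -/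
open Polynomial TensorProduct

set_option synthInstance.maxHeartbeats 1000000
set_option maxHeartbeats 1000000

noncomputable section

section Aux16

variable (g : ℕ) (a : Fin (g - 1) × Fin 2 → ℂ)

/-- The denominator `a_{i,j} ∏_{r ≠ i} (a_{i,j} - a_{r,j})`. -/
def prymDen (i : Fin (g - 1)) (j : Fin 2) : ℂ :=
  a (i, j) * ∏ r ∈ Finset.univ.erase i, (a (i, j) - a (r, j))

/-- The residue functional at the `i`-th node. -/
def prymRes (i : Fin (g - 1)) : PP →ₗ[ℂ] ℂ :=
  (prymDen g a i 0)⁻¹ • ((Polynomial.leval (a (i, 0))).comp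
      (LinearMap.fst ℂ (Polynomial ℂ) (Polynomial ℂ))) +
  (prymDen g a i 1)⁻¹ • ((Polynomial.leval (a (i, 1))).comp
      (LinearMap.snd ℂ (Polynomial ℂ) (Polynomial ℂ)))

/-- The residue functional at the node over `0`. -/
def prymRes0 : PP →ₗ[ℂ] ℂ :=
  ((prymM g a 0).eval 0)⁻¹ • ((Polynomial.leval 0).comp
      (LinearMap.fst ℂ (Polynomial ℂ) (Polynomial ℂ))) +
  ((prymM g a 1).eval 0)⁻¹ • ((Polynomial.leval 0).comp
      (LinearMap.snd ℂ (Polynomial ℂ) (Polynomial ℂ)))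

/-- The space of pairs of degree `< g` polynomials satisfying the residue conditions. -/
def Rsub : Submodule ℂ PP :=
  ((Polynomial.degreeLT ℂ g).comap (LinearMap.fst ℂ (Polynomial ℂ) (Polynomial ℂ))) ⊓
  ((Polynomial.degreeLT ℂ g).comap (LinearMap.snd ℂ (Polynomial ℂ) (Polynomial ℂ))) ⊓
  ((⨅ i : Fin (g - 1), LinearMap.ker (prymRes g a i)) ⊓ LinearMap.ker (prymRes0 g a))

variable {g a}

lemma prymRes_apply (i : Fin (g - 1)) (f : PP) :
    prymRes g a i f = (prymDen g a i 0)⁻¹ * f.1.eval (a (i, 0)) +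
      (prymDen g a i 1)⁻¹ * f.2.eval (a (i, 1)) := by
  simp [prymRes, Polynomial.leval_apply]

lemma prymRes0_apply (f : PP) :
    prymRes0 g a f = ((prymM g a 0).eval 0)⁻¹ * f.1.eval 0 +
      ((prymM g a 1).eval 0)⁻¹ * f.2.eval 0 := by
  simp [prymRes0, Polynomial.leval_apply]

lemma mem_Rsub {f : PP} :
    f ∈ Rsub g a ↔ f.1 ∈ Polynomial.degreeLT ℂ g ∧ f.2 ∈ Polynomial.degreeLT ℂ g ∧
      (∀ i, prymRes g a i f = 0) ∧ prymRes0 g a f = 0 := by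
  simp [Rsub, Submodule.mem_inf, Submodule.mem_iInf, LinearMap.mem_ker, and_assoc]

lemma prymDen_ne (ha : PrymAdmissible g a) (i : Fin (g - 1)) (j : Fin 2) :
    prymDen g a i j ≠ 0 := by
  refine mul_ne_zero (ha.1 _) (Finset.prod_ne_zero_iff.2 fun r hr => ?_)
  rw [Finset.mem_erase] at hr
  exact sub_ne_zero_of_ne fun h => hr.1 (ha.2 j h).symm

lemma prymM_eval_zero_ne (ha : PrymAdmissible g a) (j : Fin 2) :
    (prymM g a j).eval 0 ≠ 0 := by
  rw [prymM, Polynomial.eval_prod]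
  refine Finset.prod_ne_zero_iff.2 fun r _ => ?_
  simp [ha.1 (r, j)]

lemma eval_prod_erase_self (b : Fin (g - 1) → ℂ) (i : Fin (g - 1)) {s : Finset (Fin (g - 1))}
    (hi : i ∈ s) :
    (∏ r ∈ s, (X - C (b r))).eval (b i) = 0 := by
  rw [Polynomial.eval_prod]
  exact Finset.prod_eq_zero hi (by simp)

lemma eval_fst_node (j : Fin g) (i : Fin (g - 1)) :
    (prymCanSection g a j).1.eval (a (i, 0)) =
      if (j : ℕ) = (i : ℕ) then prymDen g a i 0 else 0 := by
  rw [prymCanSection]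
  by_cases hj : (j : ℕ) < g - 1
  · rw [dif_pos hj]
    by_cases hij : (⟨(j : ℕ), hj⟩ : Fin (g - 1)) = i
    · have : (j : ℕ) = (i : ℕ) := by rw [← hij]
      rw [if_pos this, hij]
      simp [prymDen, Polynomial.eval_prod]
    · have hne : (j : ℕ) ≠ (i : ℕ) := fun h => hij (Fin.ext h)
      rw [if_neg hne]
      simp only [Polynomial.eval_mul, Polynomial.eval_X]
      rw [eval_prod_erase_self (fun r => a (r, 0)) i
        (Finset.mem_erase.2 ⟨fun h => hij h.symm, Finset.mem_univ i⟩), mul_zero]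
  · rw [dif_neg hj]
    have hne : (j : ℕ) ≠ (i : ℕ) := by have := i.2; omega
    rw [if_neg hne, prymM]
    exact eval_prod_erase_self (fun r => a (r, 0)) i (Finset.mem_univ i)

lemma eval_snd_node (j : Fin g) (i : Fin (g - 1)) :
    (prymCanSection g a j).2.eval (a (i, 1)) =
      if (j : ℕ) = (i : ℕ) then -(prymDen g a i 1) else 0 := by
  rw [prymCanSection]
  by_cases hj : (j : ℕ) < g - 1
  · rw [dif_pos hj]
    by_cases hij : (⟨(j : ℕ), hj⟩ : Fin (g - 1)) = i
    · have : (j : ℕ) = (i : ℕ) := by rw [← hij]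
      rw [if_pos this, hij]
      simp [prymDen, Polynomial.eval_prod]
    · have hne : (j : ℕ) ≠ (i : ℕ) := fun h => hij (Fin.ext h)
      rw [if_neg hne]
      simp only [Polynomial.eval_neg, Polynomial.eval_mul, Polynomial.eval_X]
      rw [eval_prod_erase_self (fun r => a (r, 1)) i
        (Finset.mem_erase.2 ⟨fun h => hij h.symm, Finset.mem_univ i⟩), mul_zero, neg_zero]
  · rw [dif_neg hj]
    have hne : (j : ℕ) ≠ (i : ℕ) := by have := i.2; omega
    rw [if_neg hne]
    simp only [prymM, Polynomial.eval_neg]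
    rw [eval_prod_erase_self (fun r => a (r, 1)) i (Finset.mem_univ i), neg_zero]

lemma eval_fst_zero (j : Fin g) :
    (prymCanSection g a j).1.eval 0 =
      if (j : ℕ) = g - 1 then (prymM g a 0).eval 0 else 0 := by
  rw [prymCanSection]
  by_cases hj : (j : ℕ) < g - 1
  · rw [dif_pos hj, if_neg (by omega)]; simp
  · rw [dif_neg hj, if_pos (by have := j.2; omega)]

lemma eval_snd_zero (j : Fin g) :
    (prymCanSection g a j).2.eval 0 =
      if (j : ℕ) = g - 1 then -((prymM g a 1).eval 0) else 0 := by
  rw [prymCanSection]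
  by_cases hj : (j : ℕ) < g - 1
  · rw [dif_pos hj, if_neg (by omega)]; simp
  · rw [dif_neg hj, if_pos (by have := j.2; omega)]; simp

lemma prod_X_sub_C_monic (b : Fin (g - 1) → ℂ) (s : Finset (Fin (g - 1))) :
    (∏ r ∈ s, (X - C (b r))).Monic :=
  Polynomial.monic_prod_of_monic _ _ fun r _ => Polynomial.monic_X_sub_C (b r)

lemma prod_X_sub_C_natDegree (b : Fin (g - 1) → ℂ) (s : Finset (Fin (g - 1))) :
    (∏ r ∈ s, (X - C (b r))).natDegree = s.card := by
  rw [Polynomial.natDegree_prod _ _ fun r _ => (Polynomial.monic_X_sub_C (b r)).ne_zero]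
  simp

lemma deg_fst_mem (hg : 5 ≤ g) (j : Fin g) :
    (prymCanSection g a j).1 ∈ Polynomial.degreeLT ℂ g := by
  rw [Polynomial.mem_degreeLT, prymCanSection]
  by_cases hj : (j : ℕ) < g - 1
  · rw [dif_pos hj]
    set P := ∏ r ∈ Finset.univ.erase (⟨(j : ℕ), hj⟩ : Fin (g - 1)), (X - C (a (r, 0))) with hP
    have hPm : P.Monic := prod_X_sub_C_monic _ _
    have hne : (X : Polynomial ℂ) * P ≠ 0 := mul_ne_zero Polynomial.X_ne_zero hPm.ne_zero
    rw [Polynomial.degree_eq_natDegree hne, Polynomial.natDegree_mul Polynomial.X_ne_zero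
      hPm.ne_zero, Polynomial.natDegree_X, prod_X_sub_C_natDegree]
    rw [Finset.card_erase_of_mem (Finset.mem_univ _), Finset.card_univ, Fintype.card_fin]
    exact_mod_cast by omega
  · rw [dif_neg hj, prymM]
    have hm := prod_X_sub_C_monic (fun r => a (r, 0)) Finset.univ
    rw [Polynomial.degree_eq_natDegree hm.ne_zero, prod_X_sub_C_natDegree,
      Finset.card_univ, Fintype.card_fin]
    exact_mod_cast by omega

lemma deg_snd_mem (hg : 5 ≤ g) (j : Fin g) :
    (prymCanSection g a j).2 ∈ Polynomial.degreeLT ℂ g := by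
  rw [Polynomial.mem_degreeLT, prymCanSection]
  by_cases hj : (j : ℕ) < g - 1
  · rw [dif_pos hj]
    set P := ∏ r ∈ Finset.univ.erase (⟨(j : ℕ), hj⟩ : Fin (g - 1)), (X - C (a (r, 1))) with hP
    have hPm : P.Monic := prod_X_sub_C_monic _ _
    have hne : (X : Polynomial ℂ) * P ≠ 0 := mul_ne_zero Polynomial.X_ne_zero hPm.ne_zero
    rw [Polynomial.degree_neg, Polynomial.degree_eq_natDegree hne,
      Polynomial.natDegree_mul Polynomial.X_ne_zero hPm.ne_zero, Polynomial.natDegree_X,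
      prod_X_sub_C_natDegree]
    rw [Finset.card_erase_of_mem (Finset.mem_univ _), Finset.card_univ, Fintype.card_fin]
    exact_mod_cast by omega
  · rw [dif_neg hj]
    have hm := prod_X_sub_C_monic (fun r => a (r, 1)) Finset.univ
    simp only [prymM, Polynomial.degree_neg]
    rw [Polynomial.degree_eq_natDegree hm.ne_zero,
      prod_X_sub_C_natDegree, Finset.card_univ, Fintype.card_fin]
    exact_mod_cast by omega

lemma degreeLT_iff_le (hg : 1 ≤ g) (p : Polynomial ℂ) :
    p ∈ Polynomial.degreeLT ℂ g ↔ p.degree ≤ ((g - 1 : ℕ) : WithBot ℕ) := by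
  rw [Polynomial.mem_degreeLT]
  constructor
  · intro h
    rcases eq_or_ne p 0 with rfl | hp
    · simp
    · rw [Polynomial.degree_eq_natDegree hp] at h ⊢
      exact_mod_cast Nat.le_pred_of_lt (by exact_mod_cast h)
  · intro h
    refine lt_of_le_of_lt h ?_
    exact_mod_cast Nat.sub_lt (by omega) one_pos

lemma sec_mem_Rsub (hg : 5 ≤ g) (ha : PrymAdmissible g a) (j : Fin g) :
    prymCanSection g a j ∈ Rsub g a := by
  rw [mem_Rsub]
  refine ⟨deg_fst_mem hg j, deg_snd_mem hg j, fun i => ?_, ?_⟩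
  · rw [prymRes_apply, eval_fst_node, eval_snd_node]
    by_cases h : (j : ℕ) = (i : ℕ)
    · rw [if_pos h, if_pos h, inv_mul_cancel₀ (prymDen_ne ha i 0), mul_neg,
        inv_mul_cancel₀ (prymDen_ne ha i 1)]
      ring
    · rw [if_neg h, if_neg h, mul_zero, mul_zero, add_zero]
  · rw [prymRes0_apply, eval_fst_zero, eval_snd_zero]
    by_cases h : (j : ℕ) = g - 1
    · rw [if_pos h, if_pos h, inv_mul_cancel₀ (prymM_eval_zero_ne ha 0), mul_neg,
        inv_mul_cancel₀ (prymM_eval_zero_ne ha 1)]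
      ring
    · rw [if_neg h, if_neg h, mul_zero, mul_zero, add_zero]

lemma li_fst (hg : 5 ≤ g) (ha : PrymAdmissible g a) :
    LinearIndependent ℂ (fun j : Fin g => (prymCanSection g a j).1) := by
  rw [Fintype.linearIndependent_iff]
  intro c hc j
  by_cases hj : (j : ℕ) < g - 1
  · have h := congrArg (Polynomial.eval (a (⟨(j : ℕ), hj⟩, 0))) hc
    rw [Polynomial.eval_finset_sum] at h
    simp only [Polynomial.eval_smul, smul_eq_mul, eval_fst_node, Polynomial.eval_zero] at h
    rw [Finset.sum_eq_single j
      (fun b _ hb => by rw [if_neg (fun hbj => hb (Fin.ext hbj)), mul_zero])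
      (fun hbs => absurd (Finset.mem_univ j) hbs)] at h
    rw [if_pos rfl] at h
    exact (mul_eq_zero.1 h).resolve_right (prymDen_ne ha _ 0)
  · have hjl : (j : ℕ) = g - 1 := by have := j.2; omega
    have h := congrArg (Polynomial.eval 0) hc
    rw [Polynomial.eval_finset_sum] at h
    simp only [Polynomial.eval_smul, smul_eq_mul, eval_fst_zero, Polynomial.eval_zero] at h
    rw [Finset.sum_eq_single j
      (fun b _ hb => by
        rw [if_neg (fun hbj => hb (Fin.ext (hbj.trans hjl.symm))), mul_zero])
      (fun hbs => absurd (Finset.mem_univ j) hbs)] at h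
    rw [if_pos hjl] at h
    exact (mul_eq_zero.1 h).resolve_right (prymM_eval_zero_ne ha 0)

end Aux16
/-- for an admissible Prym parameter system of genus `g ≥ 5`, the canonical
sections `s_1, …, s_g` are linearly independent and their span `H_g(a)` is exactly the space of
pairs of polynomials of degree `≤ g-1` satisfying the residue conditions at the nodes; in
particular `H_g(a)` has dimension `g` (it realizes `H⁰(C, ω_C)`). -/
theorem statement16 (g : ℕ) (hg : 5 ≤ g) (a : Fin (g - 1) × Fin 2 → ℂ)
    (ha : PrymAdmissible g a) :
    LinearIndependent ℂ (prymCanSection g a) ∧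
    (Hspace g a : Set PP) =
      {f : PP | f.1.degree ≤ (g - 1 : ℕ) ∧ f.2.degree ≤ (g - 1 : ℕ) ∧
        (∀ i : Fin (g - 1),
          f.1.eval (a (i, 0)) /
              (a (i, 0) * ∏ r ∈ Finset.univ.erase i, (a (i, 0) - a (r, 0))) +
            f.2.eval (a (i, 1)) /
              (a (i, 1) * ∏ r ∈ Finset.univ.erase i, (a (i, 1) - a (r, 1))) = 0) ∧
        f.1.eval 0 / (prymM g a 0).eval 0 + f.2.eval 0 / (prymM g a 1).eval 0 = 0} ∧
    Module.finrank ℂ (Hspace g a) = g := by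
  have hLI : LinearIndependent ℂ (prymCanSection g a) :=
    LinearIndependent.of_comp (LinearMap.fst ℂ (Polynomial ℂ) (Polynomial ℂ)) (li_fst hg ha)
  have hle : Hspace g a ≤ Rsub g a := by
    rw [Hspace, Submodule.span_le]
    rintro _ ⟨j, rfl⟩
    exact sec_mem_Rsub hg ha j
  have hge : Rsub g a ≤ Hspace g a := by
    intro f hf
    obtain ⟨hd1, hd2, hres, hres0⟩ := mem_Rsub.1 hf
    set V := Polynomial.degreeLT ℂ g with hV
    haveI : FiniteDimensional ℂ V :=
      LinearEquiv.finiteDimensional (Polynomial.degreeLTEquiv ℂ g).symm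
    set q' : Fin g → V := fun j => ⟨(prymCanSection g a j).1, deg_fst_mem hg j⟩ with hq'
    have hq'li : LinearIndependent ℂ q' :=
      LinearIndependent.of_comp V.subtype (li_fst hg ha)
    have hfr : Module.finrank ℂ V = g := by
      rw [LinearEquiv.finrank_eq (Polynomial.degreeLTEquiv ℂ g)]
      simp
    haveI : Nonempty (Fin g) := ⟨⟨0, by omega⟩⟩
    have htop : Submodule.span ℂ (Set.range q') = ⊤ :=
      hq'li.span_eq_top_of_card_eq_finrank (by simp [hfr])
    have hmemV : (⟨f.1, hd1⟩ : V) ∈ Submodule.span ℂ (Set.range q') :=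
      htop ▸ Submodule.mem_top
    obtain ⟨c, hc⟩ := (Submodule.mem_span_range_iff_exists_fun ℂ).1 hmemV
    have hc1 : ∑ j, c j • (prymCanSection g a j).1 = f.1 := by
      have := congrArg Subtype.val hc
      simpa using this
    set F : PP := ∑ j, c j • prymCanSection g a j with hF
    have hFmem : F ∈ Hspace g a := Submodule.sum_mem _ fun j _ =>
      Submodule.smul_mem _ _ (Submodule.subset_span ⟨j, rfl⟩)
    have hF1 : F.1 = f.1 := by
      rw [hF, ← hc1, Prod.fst_sum]
      exact Finset.sum_congr rfl fun j _ => rfl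
    obtain ⟨_, hFd2, hFres, hFres0⟩ := mem_Rsub.1 (hle hFmem)
    set h2 : Polynomial ℂ := f.2 - F.2 with hh2
    have hd : h2 ∈ V := sub_mem hd2 hFd2
    have hroot : ∀ i : Fin (g - 1), h2.eval (a (i, 1)) = 0 := by
      intro i
      have e1 := hres i
      have e2 := hFres i
      rw [prymRes_apply] at e1 e2
      rw [hF1] at e2
      have h4 := add_left_cancel (e1.trans e2.symm)
      have h5 := mul_left_cancel₀ (inv_ne_zero (prymDen_ne ha i 1)) h4
      rw [hh2, Polynomial.eval_sub, h5, sub_self]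
    have hroot0 : h2.eval 0 = 0 := by
      have e1 := hres0
      have e2 := hFres0
      rw [prymRes0_apply] at e1 e2
      rw [hF1] at e2
      have h4 := add_left_cancel (e1.trans e2.symm)
      have h5 := mul_left_cancel₀ (inv_ne_zero (prymM_eval_zero_ne ha 1)) h4
      rw [hh2, Polynomial.eval_sub, h5, sub_self]
    have h2z : h2 = 0 := by
      rcases eq_or_ne h2 0 with h | h
      · exact h
      · set pts : Fin g → ℂ := fun m =>
          if hm : (m : ℕ) < g - 1 then a (⟨(m : ℕ), hm⟩, 1) else 0 with hpts
        have hinj : Function.Injective pts := by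
          intro x y hxy
          simp only [hpts] at hxy
          by_cases hx : (x : ℕ) < g - 1 <;> by_cases hy : (y : ℕ) < g - 1
          · rw [dif_pos hx, dif_pos hy] at hxy
            have h6 := ha.2 1 hxy
            exact Fin.ext (by simpa using congrArg Fin.val h6)
          · rw [dif_pos hx, dif_neg hy] at hxy
            exact absurd hxy (ha.1 _)
          · rw [dif_neg hx, dif_pos hy] at hxy
            exact absurd hxy.symm (ha.1 _)
          · have := x.2; have := y.2; exact Fin.ext (by omega)
        have heval : ∀ m, h2.eval (pts m) = 0 := by
          intro m
          simp only [hpts]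
          by_cases hm : (m : ℕ) < g - 1
          · rw [dif_pos hm]; exact hroot _
          · rw [dif_neg hm]; exact hroot0
        refine Polynomial.eq_zero_of_natDegree_lt_card_of_eval_eq_zero h2 hinj heval ?_
        rw [Fintype.card_fin]
        have := Polynomial.mem_degreeLT.1 hd
        rw [Polynomial.degree_eq_natDegree h] at this
        exact_mod_cast this
    have hfF : f = F := Prod.ext hF1.symm (sub_eq_zero.1 h2z)
    rw [hfF]
    exact hFmem
  have heq : Hspace g a = Rsub g a := le_antisymm hle hge
  refine ⟨hLI, ?_, ?_⟩
  · ext f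
    rw [SetLike.mem_coe, heq, mem_Rsub, degreeLT_iff_le (by omega),
      degreeLT_iff_le (by omega), Set.mem_setOf_eq]
    have hiff1 : ∀ i : Fin (g - 1), (prymRes g a i f = 0 ↔
        f.1.eval (a (i, 0)) /
              (a (i, 0) * ∏ r ∈ Finset.univ.erase i, (a (i, 0) - a (r, 0))) +
            f.2.eval (a (i, 1)) /
              (a (i, 1) * ∏ r ∈ Finset.univ.erase i, (a (i, 1) - a (r, 1))) = 0) := by
      intro i
      have hdiv : ∀ (x y : ℂ), x / y = y⁻¹ * x := fun x y => by rw [div_eq_mul_inv, mul_comm]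
      rw [prymRes_apply, hdiv, hdiv]
      exact Iff.rfl
    have hiff0 : (prymRes0 g a f = 0 ↔
        f.1.eval 0 / (prymM g a 0).eval 0 + f.2.eval 0 / (prymM g a 1).eval 0 = 0) := by
      have hdiv : ∀ (x y : ℂ), x / y = y⁻¹ * x := fun x y => by rw [div_eq_mul_inv, mul_comm]
      rw [prymRes0_apply, hdiv, hdiv]
    constructor
    · rintro ⟨h1, h2, h3, h4⟩
      exact ⟨h1, h2, fun i => (hiff1 i).1 (h3 i), hiff0.1 h4⟩
    · rintro ⟨h1, h2, h3, h4⟩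
      exact ⟨h1, h2, fun i => (hiff1 i).2 (h3 i), hiff0.2 h4⟩
  · rw [Hspace, finrank_span_eq_card hLI, Fintype.card_fin]
end
end
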